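/- arXiv:1609.04146 — 9 statements merged into one kernel-verified Lean document; each statement's English description precedes it below -/
import Mathlib

section
/- Suppose (BR) holds. Then m · ∏_{j=1}^{ℓ} c_j = 1080. -/
open LaurentPolynomial Finset

/-- `r a = X^{2a} + X^{-2a}` in `ℤ[X, X⁻¹]`, where `X` plays the role of `ζ^{1/2}`. -/
noncomputable def rLaurent (a : ℤ) : LaurentPolynomial ℤ := T (2 * a) + T (-(2 * a))

/-- `σ₁(d) = ∑_j r(d_j)`. -/
noncomputable def sigma1 {ℓ : ℕ} (d : Fin ℓ → ℤ) : LaurentPolynomial ℤ :=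
  ∑ j, rLaurent (d j)

/-- `σ₂(d) = ∑_{i < j} r(d_i) r(d_j)`. -/
noncomputable def sigma2 {ℓ : ℕ} (d : Fin ℓ → ℤ) : LaurentPolynomial ℤ :=
  ∑ i, ∑ j ∈ univ.filter (fun j => i < j), rLaurent (d i) * rLaurent (d j)


noncomputable def eps : LaurentPolynomial ℤ →+* ℤ :=
  AddMonoidAlgebra.liftNCRingHom (RingHom.id ℤ) (1 : Multiplicative ℤ →* ℤ)
    (fun _ _ => Commute.all _ _)

theorem eps_T (n : ℤ) : eps (T n) = 1 := by
  show AddMonoidAlgebra.liftNC _ _ (AddMonoidAlgebra.single n (1:ℤ)) = 1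
  rw [AddMonoidAlgebra.liftNC_single]; simp

noncomputable def SS (a : ℕ) : LaurentPolynomial ℤ := ∑ i ∈ range (2*a), T (i:ℤ)

theorem eps_SS (a : ℕ) : eps (SS a) = 2*(a:ℤ) := by
  simp [SS, map_sum, eps_T]

theorem eps_r (a : ℤ) : eps (rLaurent a) = 2 := by
  simp [rLaurent, map_add, eps_T]

theorem key (a : ℕ) : (T (a:ℤ) - T (-(a:ℤ)) : LaurentPolynomial ℤ)
    = (T (-(a:ℤ)) * SS a) * (T 1 - 1) := by
  have h2 : ∀ i : ℕ, (T 1 : LaurentPolynomial ℤ)^i = T (i:ℤ) := by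
    intro i; rw [T_pow]; norm_num
  have g : SS a * (T 1 - 1) = T ((2*a : ℕ):ℤ) - 1 := by
    have h := geom_sum_mul (T 1 : LaurentPolynomial ℤ) (2*a)
    simp only [h2] at h
    exact h
  rw [mul_assoc, g, mul_sub, mul_one, ← T_add]
  push_cast
  ring_nf

theorem tne : (T 1 - 1 : LaurentPolynomial ℤ) ≠ 0 := by
  intro h
  rw [sub_eq_zero, ← T_zero] at h
  have h2 : AddMonoidAlgebra.single (1:ℤ) (1:ℤ) = AddMonoidAlgebra.single 0 1 := h
  rw [AddMonoidAlgebra.single_inj] at h2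
  simp at h2

/-- Equation (BR). -/
theorem stmt_0 (ℓ : ℕ) (hℓ : 1 ≤ ℓ) (hℓ24 : ℓ ≤ 24) (k : ℕ) (hk : k = 24 - ℓ)
    (m : ℕ) (hm : 1 ≤ m) (c d : Fin ℓ → ℕ)
    (hc : ∀ j, 1 ≤ c j) (hd : ∀ j, 1 ≤ d j)
    (hBR : (m : LaurentPolynomial ℤ) *
        ∏ j, (T ((c j : ℤ) * (d j : ℤ)) - T (-((c j : ℤ) * (d j : ℤ)))) =
      (sigma2 (fun j => (d j : ℤ)) +
          ((2 * (k : ℤ) - 1 : ℤ) : LaurentPolynomial ℤ) * sigma1 (fun j => (d j : ℤ)) +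
          ((2 * (k : ℤ) ^ 2 - 3 * (k : ℤ) + (ℓ : ℤ) : ℤ) : LaurentPolynomial ℤ)) *
        ∏ j, (T ((d j : ℤ)) - T (-(d j : ℤ)))) :
    m * ∏ j, c j = 1080 := by
  have hprod : ∀ (a : Fin ℓ → ℕ),
      (∏ j, ((T ((a j : ℤ)) : LaurentPolynomial ℤ) - T (-((a j : ℤ)))))
        = (∏ j, (T (-((a j:ℤ))) * SS (a j))) * (T 1 - 1)^ℓ := by
    intro a
    calc (∏ j, ((T ((a j : ℤ)) : LaurentPolynomial ℤ) - T (-((a j : ℤ)))))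
        = ∏ j, ((T (-((a j:ℤ))) * SS (a j)) * (T 1 - 1)) :=
          prod_congr rfl (fun j _ => key (a j))
      _ = (∏ j, (T (-((a j:ℤ))) * SS (a j))) * ∏ _j : Fin ℓ, (T 1 - 1) := prod_mul_distrib
      _ = (∏ j, (T (-((a j:ℤ))) * SS (a j))) * (T 1 - 1)^ℓ := by
          rw [prod_const, card_univ, Fintype.card_fin]
  have hcd : ∀ j, (c j : ℤ) * (d j : ℤ) = ((c j * d j : ℕ) : ℤ) := fun j => by
    push_cast; ring
  simp only [hcd] at hBR
  rw [hprod (fun j => c j * d j), hprod d, ← mul_assoc, ← mul_assoc] at hBR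
  have hcanc := mul_right_cancel₀ (pow_ne_zero ℓ tne) hBR
  have he := congrArg eps hcanc
  simp only [map_mul, map_natCast, map_prod, eps_T, eps_SS, one_mul, map_add, map_intCast,
    Int.cast_id, sigma1, sigma2, map_sum, eps_r] at he
  clear hBR hcanc hcd hprod
  have hCn : ∑ i : Fin ℓ, #(Finset.filter (fun j => i < j) (univ : Finset (Fin ℓ)))
      = ∑ i ∈ range ℓ, i := by
    simp only [filter_lt_eq_Ioi, Fin.card_Ioi]
    rw [Fin.sum_univ_eq_sum_range (fun i => ℓ - 1 - i) ℓ]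
    exact sum_range_reflect (fun i => i) ℓ
  have hσ2 : (∑ x : Fin ℓ, ∑ _j ∈ Finset.filter (fun j => x < j) (univ : Finset (Fin ℓ)),
      ((2:ℤ) * 2)) = (↑(∑ i ∈ range ℓ, i) : ℤ) * 4 := by
    simp only [sum_const, nsmul_eq_mul]
    rw [← sum_mul, ← Nat.cast_sum, hCn]
    norm_num
  have hpc : (∏ x : Fin ℓ, ((2:ℤ) * ↑(c x * d x)))
      = 2^ℓ * ((∏ x, (c x : ℤ)) * ∏ x, (d x : ℤ)) := by
    rw [prod_mul_distrib, prod_const, card_univ, Fintype.card_fin]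
    push_cast
    rw [prod_mul_distrib]
  have hpd : (∏ x : Fin ℓ, ((2:ℤ) * ↑(d x))) = 2^ℓ * ∏ x, (d x : ℤ) := by
    rw [prod_mul_distrib, prod_const, card_univ, Fintype.card_fin]
  have hs1 : (∑ _x : Fin ℓ, (2:ℤ)) = 2 * ℓ := by
    rw [sum_const, card_univ, Fintype.card_fin]; ring
  rw [hσ2, hpc, hpd, hs1] at he
  set A : ℕ := ∑ i ∈ range ℓ, i with hA
  have hA2 : (A : ℤ) * 2 = (ℓ : ℤ) * ((ℓ : ℤ) - 1) := by
    have h0 := congrArg (Nat.cast : ℕ → ℤ) (sum_range_id_mul_two ℓ)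
    push_cast at h0
    have h1 : ((ℓ - 1 : ℕ) : ℤ) = (ℓ : ℤ) - 1 := by omega
    rw [hA]
    push_cast
    rw [h0, h1]
  have hkz : (k : ℤ) = 24 - (ℓ : ℤ) := by omega
  have hne : ((2:ℤ)^ℓ * ∏ x, (d x : ℤ)) ≠ 0 := by
    have : (0:ℤ) < ∏ x, (d x : ℤ) := prod_pos (fun j _ => by exact_mod_cast hd j)
    positivity
  have h2 : ((m:ℤ) * ∏ x, (c x : ℤ)) * ((2:ℤ)^ℓ * ∏ x, (d x : ℤ))
      = 1080 * ((2:ℤ)^ℓ * ∏ x, (d x : ℤ)) := by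
    have hE : ((A:ℤ) * 4 + (2 * (k:ℤ) - 1) * (2 * ℓ) + (2 * (k:ℤ)^2 - 3*(k:ℤ) + ℓ))
        = 1080 := by
      rw [hkz]
      linear_combination 2 * hA2
    calc ((m:ℤ) * ∏ x, (c x : ℤ)) * ((2:ℤ)^ℓ * ∏ x, (d x : ℤ))
        = (m:ℤ) * (2^ℓ * ((∏ x, (c x : ℤ)) * ∏ x, (d x : ℤ))) := by ring
      _ = ((A:ℤ) * 4 + (2 * (k:ℤ) - 1) * (2 * ℓ) + (2 * (k:ℤ)^2 - 3*(k:ℤ) + ℓ))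
            * (2^ℓ * ∏ x, (d x : ℤ)) := he
      _ = 1080 * ((2:ℤ)^ℓ * ∏ x, (d x : ℤ)) := by rw [hE]
  have h3 := mul_right_cancel₀ hne h2
  exact_mod_cast h3
end

section
/- Suppose (BR) holds. Then ∑_{j=1}^{ℓ} c_j² d_j² = 2 · ∑_{j=1}^{ℓ} d_j². -/
open LaurentPolynomial Finset PowerSeries

open LaurentPolynomial Finset

noncomputable def Eexp (a : ℤ) : PowerSeries ℚ := rescale (a : ℚ) (PowerSeries.exp ℚ)

lemma coeff_Eexp (a : ℤ) (n : ℕ) : PowerSeries.coeff (R := ℚ) n (Eexp a) = (a:ℚ)^n / n.factorial := by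
  simp [Eexp, PowerSeries.coeff_rescale, PowerSeries.coeff_exp]; ring

noncomputable def sh (a : ℤ) : PowerSeries ℚ := Eexp a - Eexp (-a)

lemma coeff_form (A B : ℚ) (w : PowerSeries ℚ) :
    (PowerSeries.coeff (R := ℚ) 0 (PowerSeries.C (R := ℚ) A + PowerSeries.C (R := ℚ) B * X^2 + X^3 * w) = A)
    ∧ (PowerSeries.coeff (R := ℚ) 1 (PowerSeries.C (R := ℚ) A + PowerSeries.C (R := ℚ) B * X^2 + X^3 * w) = 0)
    ∧ (PowerSeries.coeff (R := ℚ) 2 (PowerSeries.C (R := ℚ) A + PowerSeries.C (R := ℚ) B * X^2 + X^3 * w) = B) := by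
  rw [show (X^3 * w : PowerSeries ℚ) = w * X^3 from mul_comm _ _]
  refine ⟨?_, ?_, ?_⟩ <;>
    simp [PowerSeries.coeff_X_pow, PowerSeries.coeff_mul_X_pow']

lemma sh_form (a : ℤ) : ∃ u, sh a =
    (PowerSeries.C (R := ℚ) (2*(a:ℚ)) + PowerSeries.C (R := ℚ) ((a:ℚ)^3/3) * X^2 + X^3 * u) * X := by
  have hdvd : (X:PowerSeries ℚ)^4 ∣ sh a - PowerSeries.C (R := ℚ) (2*(a:ℚ)) * X - PowerSeries.C (R := ℚ) ((a:ℚ)^3/3) * X^3 := by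
    rw [PowerSeries.X_pow_dvd_iff]
    intro m hm
    interval_cases m <;>
      · simp only [map_sub, sh, coeff_Eexp, PowerSeries.coeff_C_mul, PowerSeries.coeff_X,
          PowerSeries.coeff_X_pow, Int.cast_neg, Nat.factorial]
        push_cast
        norm_num
        try ring
  obtain ⟨u, hu⟩ := hdvd
  refine ⟨u, ?_⟩
  have : sh a = PowerSeries.C (R := ℚ) (2*(a:ℚ)) * X + PowerSeries.C (R := ℚ) ((a:ℚ)^3/3) * X^3 + X^4 * u := by
    linear_combination hu
  rw [this]; ring

lemma prod_sh_form {ι : Type*} [DecidableEq ι] (s : Finset ι) (a : ι → ℤ) :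
    ∃ w, ∏ j ∈ s, sh (a j) =
      (PowerSeries.C (R := ℚ) (∏ j ∈ s, (2*(a j:ℚ))) +
       PowerSeries.C (R := ℚ) ((∏ j ∈ s, (2*(a j:ℚ))) * (∑ j ∈ s, (a j:ℚ)^2) / 6) * X^2 +
       X^3 * w) * X^(s.card) := by
  induction s using Finset.induction_on with
  | empty => exact ⟨0, by simp⟩
  | @insert i s hi ih =>
    obtain ⟨w, hw⟩ := ih
    obtain ⟨u, hu⟩ := sh_form (a i)
    refine ⟨(PowerSeries.C (R := ℚ) (2*(a i:ℚ)) + PowerSeries.C (R := ℚ) ((a i:ℚ)^3/3) * X^2) * w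
      + u * (PowerSeries.C (R := ℚ) (∏ j ∈ s, (2*(a j:ℚ))) +
       PowerSeries.C (R := ℚ) ((∏ j ∈ s, (2*(a j:ℚ))) * (∑ j ∈ s, (a j:ℚ)^2) / 6) * X^2 + X^3 * w)
      + PowerSeries.C (R := ℚ) ((a i:ℚ)^3/3) * PowerSeries.C (R := ℚ) ((∏ j ∈ s, (2*(a j:ℚ))) * (∑ j ∈ s, (a j:ℚ)^2) / 6) * X, ?_⟩
    rw [Finset.prod_insert hi, hw, hu, Finset.prod_insert hi, Finset.sum_insert hi,
      Finset.card_insert_of_notMem hi]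
    have e1 : PowerSeries.C (R := ℚ) (2*(a i:ℚ) * ∏ j ∈ s, (2*(a j:ℚ)))
        = PowerSeries.C (R := ℚ) (2*(a i:ℚ)) * PowerSeries.C (R := ℚ) (∏ j ∈ s, (2*(a j:ℚ))) := map_mul _ _ _
    have e2 : PowerSeries.C (R := ℚ) ((2*(a i:ℚ) * ∏ j ∈ s, (2*(a j:ℚ))) * ((a i:ℚ)^2 + ∑ j ∈ s, (a j:ℚ)^2) / 6)
        = PowerSeries.C (R := ℚ) (2*(a i:ℚ)) * PowerSeries.C (R := ℚ) ((∏ j ∈ s, (2*(a j:ℚ))) * (∑ j ∈ s, (a j:ℚ)^2) / 6)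
          + PowerSeries.C (R := ℚ) ((a i:ℚ)^3/3) * PowerSeries.C (R := ℚ) (∏ j ∈ s, (2*(a j:ℚ))) := by
      rw [← map_mul, ← map_mul, ← map_add]
      congr 1
      ring
    rw [e1, e2, pow_succ]
    ring

lemma coeff_zero_mul' (f g : PowerSeries ℚ) :
    PowerSeries.coeff (R := ℚ) 0 (f * g) = PowerSeries.coeff (R := ℚ) 0 f * PowerSeries.coeff (R := ℚ) 0 g := by
  simp [PowerSeries.coeff_mul]

lemma coeff_two_mul' (f g : PowerSeries ℚ) :
    PowerSeries.coeff (R := ℚ) 2 (f * g) = PowerSeries.coeff (R := ℚ) 0 f * PowerSeries.coeff (R := ℚ) 2 g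
      + PowerSeries.coeff (R := ℚ) 1 f * PowerSeries.coeff (R := ℚ) 1 g
      + PowerSeries.coeff (R := ℚ) 2 f * PowerSeries.coeff (R := ℚ) 0 g := by
  rw [PowerSeries.coeff_mul, Finset.Nat.sum_antidiagonal_eq_sum_range_succ_mk]
  rw [Finset.sum_range_succ, Finset.sum_range_succ, Finset.sum_range_succ, Finset.sum_range_zero]
  norm_num

lemma pairsum {n : ℕ} (g : Fin n → ℚ) :
    ∑ i, ∑ j ∈ univ.filter (fun j => i < j), (g i + g j) = ((n:ℚ) - 1) * ∑ i, g i := by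
  have h1 : ∑ i, ∑ j ∈ univ.filter (fun j => i < j), (g i + g j)
      = ∑ i : Fin n, ∑ j : Fin n, if i < j then g i + g j else 0 := by
    simp [Finset.sum_filter]
  have h2 : (∑ i : Fin n, ∑ j : Fin n, if i < j then g i + g j else 0)
      = ∑ i : Fin n, ∑ j : Fin n, (if j < i then g i + g j else 0) := by
    rw [Finset.sum_comm]
    apply Finset.sum_congr rfl; intro i _
    apply Finset.sum_congr rfl; intro j _
    rw [add_comm]
  have key : (2:ℚ) * ∑ i, ∑ j ∈ univ.filter (fun j => i < j), (g i + g j)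
      = ∑ i : Fin n, ∑ j : Fin n, ((g i + g j) - if i = j then g i + g j else 0) := by
    rw [two_mul]
    rw [h1]
    nth_rewrite 2 [h2]
    rw [← Finset.sum_add_distrib]
    apply Finset.sum_congr rfl; intro i _
    rw [← Finset.sum_add_distrib]
    apply Finset.sum_congr rfl; intro j _
    rcases lt_trichotomy i j with h | h | h
    · simp [h, h.ne, h.ne', not_lt.mpr h.le]
    · simp [h]
    · simp [h, h.ne, h.ne', not_lt.mpr h.le]
  have keyr : ∑ i : Fin n, ∑ j : Fin n, ((g i + g j) - if i = j then g i + g j else 0)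
      = 2 * ((n:ℚ) - 1) * ∑ i, g i := by
    simp only [Finset.sum_sub_distrib, Finset.sum_add_distrib, Finset.sum_const,
      Finset.sum_ite_eq, Finset.mem_univ, if_true, Finset.card_univ, Fintype.card_fin,
      nsmul_eq_mul]
    rw [← Finset.mul_sum]
    ring
  have := key.trans keyr
  linarith

noncomputable def rq (a : ℤ) : PowerSeries ℚ := Eexp (2*a) + Eexp (-(2*a))

lemma rq0 (a : ℤ) : PowerSeries.coeff (R := ℚ) 0 (rq a) = 2 := by
  simp only [rq, map_add, coeff_Eexp]
  norm_num
lemma rq1 (a : ℤ) : PowerSeries.coeff (R := ℚ) 1 (rq a) = 0 := by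
  simp [rq, coeff_Eexp]
lemma rq2 (a : ℤ) : PowerSeries.coeff (R := ℚ) 2 (rq a) = 4*(a:ℚ)^2 := by
  simp only [rq, map_add, coeff_Eexp, Nat.factorial]
  push_cast
  ring

lemma coeff_intCast (z : ℤ) (n : ℕ) :
    PowerSeries.coeff (R := ℚ) n ((z : PowerSeries ℚ)) = if n = 0 then (z:ℚ) else 0 := by
  rw [← map_intCast (PowerSeries.C (R := ℚ)) z, PowerSeries.coeff_C]

noncomputable def expHom : Multiplicative ℤ →* PowerSeries ℚ where
  toFun n := Eexp (Multiplicative.toAdd n)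
  map_one' := by
    show Eexp 0 = 1
    simp only [Eexp, Int.cast_zero, PowerSeries.rescale_zero]
    simp [PowerSeries.constantCoeff_exp]
  map_mul' a b := by
    show Eexp (_ + _) = Eexp _ * Eexp _
    simp [Eexp, PowerSeries.exp_mul_exp_eq_exp_add]

noncomputable def Φ : LaurentPolynomial ℤ →ₐ[ℤ] PowerSeries ℚ :=
  AddMonoidAlgebra.lift ℤ (PowerSeries ℚ) ℤ expHom

lemma Φ_T (a : ℤ) : Φ (T a) = Eexp a := by
  show Φ (AddMonoidAlgebra.single a (1:ℤ)) = Eexp a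
  rw [Φ, AddMonoidAlgebra.lift_single]
  simp [expHom]
  exact one_smul ℤ (Eexp a)

lemma Φ_r (a : ℤ) : Φ (rLaurent a) = rq a := by
  simp [rLaurent, rq, Φ_T]

lemma sh_def (a : ℤ) : Eexp a - Eexp (-a) = sh a := rfl

theorem stmt_1 (ℓ : ℕ) (hℓ : 1 ≤ ℓ) (hℓ24 : ℓ ≤ 24) (k : ℕ) (hk : k = 24 - ℓ)
    (m : ℕ) (hm : 1 ≤ m) (c d : Fin ℓ → ℕ)
    (hc : ∀ j, 1 ≤ c j) (hd : ∀ j, 1 ≤ d j)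
    (hBR : (m : LaurentPolynomial ℤ) *
        ∏ j, (T ((c j : ℤ) * (d j : ℤ)) - T (-((c j : ℤ) * (d j : ℤ)))) =
      (sigma2 (fun j => (d j : ℤ)) +
          ((2 * (k : ℤ) - 1 : ℤ) : LaurentPolynomial ℤ) * sigma1 (fun j => (d j : ℤ)) +
          ((2 * (k : ℤ) ^ 2 - 3 * (k : ℤ) + (ℓ : ℤ) : ℤ) : LaurentPolynomial ℤ)) *
        ∏ j, (T ((d j : ℤ)) - T (-(d j : ℤ)))) :
    ∑ j, (c j) ^ 2 * (d j) ^ 2 = 2 * ∑ j, (d j) ^ 2 := by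
  have hkq : (k : ℚ) = 24 - (ℓ:ℚ) := by
    have : (k:ℤ) = 24 - (ℓ:ℤ) := by omega
    exact_mod_cast this
  -- apply Φ
  have hBR2 := congrArg Φ hBR
  simp only [map_mul, map_natCast, map_intCast, map_prod, map_sub, map_add, map_sum,
    sigma1, sigma2, Φ_T, Φ_r, sh_def] at hBR2
  -- product expansions
  obtain ⟨w₁, hw₁⟩ := prod_sh_form (univ : Finset (Fin ℓ)) (fun j => (c j : ℤ) * (d j : ℤ))
  obtain ⟨w₂, hw₂⟩ := prod_sh_form (univ : Finset (Fin ℓ)) (fun j => (d j : ℤ))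
  rw [hw₁, hw₂, Finset.card_univ, Fintype.card_fin] at hBR2
  set F := PowerSeries.C (R := ℚ) (∏ j, (2*(((c j : ℤ) * (d j : ℤ) : ℤ):ℚ))) +
       PowerSeries.C (R := ℚ) ((∏ j, (2*(((c j : ℤ) * (d j : ℤ) : ℤ):ℚ))) * (∑ j, (((c j : ℤ) * (d j : ℤ) : ℤ):ℚ)^2) / 6) * X^2 +
       X^3 * w₁ with hF
  set G := PowerSeries.C (R := ℚ) (∏ j, (2*(((d j : ℤ) : ℤ):ℚ))) +
       PowerSeries.C (R := ℚ) ((∏ j, (2*(((d j : ℤ):ℤ):ℚ))) * (∑ j, (((d j : ℤ):ℤ):ℚ)^2) / 6) * X^2 +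
       X^3 * w₂ with hG
  set SS := (∑ i, ∑ j ∈ univ.filter (fun j => i < j), rq ((d i : ℤ)) * rq ((d j : ℤ))) +
      ((2 * (k : ℤ) - 1 : ℤ) : PowerSeries ℚ) * (∑ j, rq ((d j : ℤ))) +
      ((2 * (k : ℤ) ^ 2 - 3 * (k : ℤ) + (ℓ : ℤ) : ℤ) : PowerSeries ℚ) with hSS
  have hBR3 : ((m:ℚ⟦X⟧) * F) * X^ℓ = (SS * G) * X^ℓ := by
    rw [mul_assoc, mul_assoc]; exact hBR2
  -- coefficient values
  have hm0 : PowerSeries.coeff (R := ℚ) 0 ((m:ℚ⟦X⟧)) = (m:ℚ) := by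
    have := coeff_intCast (m:ℤ) 0; push_cast at this ⊢; simpa using this
  have hm1 : PowerSeries.coeff (R := ℚ) 1 ((m:ℚ⟦X⟧)) = 0 := by
    have := coeff_intCast (m:ℤ) 1; push_cast at this ⊢; simpa using this
  have hm2 : PowerSeries.coeff (R := ℚ) 2 ((m:ℚ⟦X⟧)) = 0 := by
    have := coeff_intCast (m:ℤ) 2; push_cast at this ⊢; simpa using this
  obtain ⟨hF0, hF1, hF2⟩ := coeff_form _ _ w₁
  obtain ⟨hG0, hG1, hG2⟩ := coeff_form _ _ w₂
  rw [← hF] at hF0 hF1 hF2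
  rw [← hG] at hG0 hG1 hG2
  -- coefficients of SS
  have hSS0 : PowerSeries.coeff (R := ℚ) 0 SS = 1080 := by
    rw [hSS]
    simp only [map_add, map_sum, coeff_zero_mul', rq0, coeff_intCast, if_pos rfl]
    rw [show ((2:ℚ)*2) = (2+2 : ℚ) by norm_num, pairsum (fun _ => (2:ℚ))]
    simp only [Finset.sum_const, Finset.card_univ, Fintype.card_fin, nsmul_eq_mul]
    push_cast
    rw [hkq]; ring
  have hSS2 : PowerSeries.coeff (R := ℚ) 2 SS = 180 * ∑ j, ((d j : ℚ))^2 := by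
    rw [hSS]
    simp only [map_add, map_sum]
    have hp : ∑ i, ∑ j ∈ univ.filter (fun j => i < j),
        PowerSeries.coeff (R := ℚ) 2 (rq ((d i : ℤ)) * rq ((d j : ℤ)))
        = ((ℓ:ℚ) - 1) * ∑ i, (8*((d i:ℚ))^2) := by
      rw [← pairsum (fun i => 8*((d i:ℚ))^2)]
      apply Finset.sum_congr rfl; intro i _
      apply Finset.sum_congr rfl; intro j _
      simp only [coeff_two_mul', rq0, rq1, rq2]
      push_cast; ring
    rw [hp, coeff_two_mul']
    simp only [coeff_intCast, rq0, rq1, rq2, map_sum]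
    norm_num
    push_cast
    rw [hkq]
    simp only [← Finset.sum_mul, ← Finset.mul_sum]
    ring
  -- extract coefficients ℓ and ℓ+2
  have E1 := congrArg (PowerSeries.coeff (R := ℚ) (0+ℓ)) hBR3
  rw [PowerSeries.coeff_mul_X_pow, PowerSeries.coeff_mul_X_pow,
    coeff_zero_mul', coeff_zero_mul', hm0, hF0, hSS0, hG0] at E1
  have E2 := congrArg (PowerSeries.coeff (R := ℚ) (2+ℓ)) hBR3
  rw [PowerSeries.coeff_mul_X_pow, PowerSeries.coeff_mul_X_pow,
    coeff_two_mul', coeff_two_mul', hm0, hm1, hm2, hF0, hF2, hSS0, hSS2, hG0, hG1, hG2] at E2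
  set Qc : ℚ := ∑ j, (((c j : ℤ) * (d j : ℤ) : ℤ):ℚ)^2 with hQc
  set Qd : ℚ := ∑ j, (((d j : ℤ):ℤ):ℚ)^2 with hQd
  set Ac : ℚ := ∏ j, (2*(((c j : ℤ) * (d j : ℤ) : ℤ):ℚ)) with hAc
  set Ad : ℚ := ∏ j, (2*(((d j : ℤ):ℤ):ℚ)) with hAd
  have hAd0 : Ad ≠ 0 := by
    rw [hAd]
    apply Finset.prod_ne_zero_iff.mpr
    intro j _
    have := hd j
    push_cast
    positivity
  have key : 1080 * Ad * (Qc - 2*Qd) = 0 := by linear_combination 6*E2 - Qc*E1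
  have hQ : Qc = 2*Qd := by
    rcases mul_eq_zero.mp key with h | h
    · exact absurd h (by positivity)
    · linarith
  have : ((∑ j, (c j)^2*(d j)^2 : ℕ) : ℚ) = ((2*∑ j, (d j)^2 : ℕ):ℚ) := by
    push_cast
    have l1 : (∑ j, ((c j:ℚ))^2*((d j:ℚ))^2) = Qc := by
      rw [hQc]; apply Finset.sum_congr rfl; intro j _; push_cast; ring
    have l2 : (∑ j, ((d j:ℚ))^2) = Qd := by
      rw [hQd]; apply Finset.sum_congr rfl; intro j _; norm_cast
    rw [l1, l2, hQ]
  exact_mod_cast this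
end

section
/- Suppose (BR) holds. Then ∑_{j=1}^{ℓ} d_j² is even; in particular N = (1/2)·∑_{j=1}^{ℓ} d_j² is a natural number. -/
open LaurentPolynomial Finset

open PowerSeries
section BRaux

/-- Monoid hom `Multiplicative ℤ →* ℚ⟦X⟧` sending `n` to `exp(n t)`. -/
noncomputable def BRexpHom : Multiplicative ℤ →* PowerSeries ℚ where
  toFun x := rescale ((Multiplicative.toAdd x : ℤ) : ℚ) (exp ℚ)
  map_one' := by simp [rescale_zero]
  map_mul' x y := by simp [exp_mul_exp_eq_exp_add, Int.cast_add]

/-- Evaluation of Laurent polynomials as power series, `T ↦ exp t`. -/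
noncomputable def BRPhi : LaurentPolynomial ℤ →ₐ[ℤ] PowerSeries ℚ :=
  (AddMonoidAlgebra.lift ℤ (PowerSeries ℚ) ℤ) BRexpHom

lemma BRPhi_T (n : ℤ) : BRPhi (T n) = rescale (n : ℚ) (exp ℚ) := by
  show BRPhi (AddMonoidAlgebra.single n 1) = _
  rw [BRPhi, AddMonoidAlgebra.lift_single]
  simp [BRexpHom]
  exact one_smul _ _

/-- Evaluation of Laurent polynomials at a nonzero rational. -/
noncomputable def BRev (x : ℚˣ) : LaurentPolynomial ℤ →ₐ[ℤ] ℚ :=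
  (AddMonoidAlgebra.lift ℤ ℚ ℤ) ((Units.coeHom ℚ).comp (zpowersHom ℚˣ x))

lemma BRev_T (x : ℚˣ) (n : ℤ) : BRev x (T n) = (x : ℚ) ^ n := by
  show BRev x (AddMonoidAlgebra.single n 1) = _
  rw [BRev, AddMonoidAlgebra.lift_single]
  simp [zpowersHom]

noncomputable def Ee (a : ℚ) : PowerSeries ℚ := rescale a (exp ℚ)

lemma coeff_Ee (a : ℚ) (n : ℕ) : coeff n (Ee a) = a ^ n / n.factorial := by
  simp [Ee, coeff_rescale, coeff_exp, algebraMap]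
  ring

/-- sinh-type factor -/
noncomputable def fS (a : ℚ) : PowerSeries ℚ := Ee a - Ee (-a)

lemma coeff_fS (a : ℚ) (n : ℕ) :
    coeff n (fS a) = (a ^ n - (-a) ^ n) / n.factorial := by
  simp [fS, coeff_Ee, div_sub_div_same]

lemma coeff_fS_zero (a : ℚ) : coeff 0 (fS a) = 0 := by simp [coeff_fS]
lemma coeff_fS_one (a : ℚ) : coeff 1 (fS a) = 2 * a := by simp [coeff_fS]; ring
lemma coeff_fS_two (a : ℚ) : coeff 2 (fS a) = 0 := by simp [coeff_fS]
lemma coeff_fS_three (a : ℚ) : coeff 3 (fS a) = a ^ 3 / 3 := by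
  rw [coeff_fS]; norm_num [Nat.factorial]; ring

/-- cosh-type term -/
noncomputable def gS (a : ℚ) : PowerSeries ℚ := Ee (2 * a) + Ee (-(2 * a))

lemma coeff_gS_zero (a : ℚ) : coeff 0 (gS a) = 2 := by
  rw [gS, map_add, coeff_Ee, coeff_Ee]; norm_num
lemma coeff_gS_one (a : ℚ) : coeff 1 (gS a) = 0 := by
  rw [gS, map_add, coeff_Ee, coeff_Ee]; norm_num
lemma coeff_gS_two (a : ℚ) : coeff 2 (gS a) = 4 * a ^ 2 := by
  rw [gS, map_add, coeff_Ee, coeff_Ee]; norm_num [Nat.factorial]; ring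

lemma coeff_gg_zero (a b : ℚ) : coeff 0 (gS a * gS b) = 4 := by
  rw [coeff_mul, Finset.Nat.sum_antidiagonal_eq_sum_range_succ_mk,
    Finset.sum_range_succ, Finset.sum_range_zero]
  simp [coeff_gS_zero]
  norm_num

lemma coeff_gg_one (a b : ℚ) : coeff 1 (gS a * gS b) = 0 := by
  rw [coeff_mul, Finset.Nat.sum_antidiagonal_eq_sum_range_succ_mk,
    Finset.sum_range_succ, Finset.sum_range_succ, Finset.sum_range_zero]
  simp [coeff_gS_zero, coeff_gS_one]

lemma coeff_gg_two (a b : ℚ) : coeff 2 (gS a * gS b) = 8 * a ^ 2 + 8 * b ^ 2 := by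
  rw [coeff_mul, Finset.Nat.sum_antidiagonal_eq_sum_range_succ_mk,
    Finset.sum_range_succ, Finset.sum_range_succ, Finset.sum_range_succ,
    Finset.sum_range_zero]
  simp [coeff_gS_zero, coeff_gS_one, coeff_gS_two]
  ring

/-- coefficient of a product where the right factor has low coefficients zero. -/
lemma coeff_mul_of_lowzero (A P : PowerSeries ℚ) (n : ℕ)
    (hP : ∀ j, j < n → coeff j P = 0) (r : ℕ) :
    coeff (n + r) (A * P) =
      ∑ i ∈ range (r + 1), coeff i A * coeff (n + r - i) P := by
  rw [coeff_mul, Finset.Nat.sum_antidiagonal_eq_sum_range_succ_mk]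
  have h1 : (n + r).succ = r + 1 + n := by omega
  rw [h1, Finset.range_eq_Ico,
    ← Finset.sum_Ico_consecutive _ (Nat.zero_le (r+1)) (by omega : r + 1 ≤ r + 1 + n),
    ← Finset.range_eq_Ico]
  have h2 : ∑ i ∈ Finset.Ico (r+1) (r+1+n), coeff i A * coeff (n + r - i) P = 0 := by
    apply Finset.sum_eq_zero
    intro i hi
    simp only [Finset.mem_Ico] at hi
    rw [hP (n + r - i) (by omega), mul_zero]
  rw [h2, add_zero]

lemma coeff_mul_le_zero (A P : PowerSeries ℚ) (n : ℕ)
    (hP : ∀ j, j < n → coeff j P = 0) (hA : coeff 0 A = 0) (m : ℕ) (hm : m ≤ n) :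
    coeff m (A * P) = 0 := by
  rw [coeff_mul, Finset.Nat.sum_antidiagonal_eq_sum_range_succ_mk]
  apply Finset.sum_eq_zero
  intro i hi
  simp only [Finset.mem_range] at hi
  rcases Nat.eq_zero_or_pos i with h | h
  · subst h; rw [hA, zero_mul]
  · rw [hP (m - i) (by omega), mul_zero]

lemma prod_fS_coeffs {ι : Type*} [DecidableEq ι] (a : ι → ℚ) (s : Finset ι) :
    (∀ m, m < s.card → coeff m (∏ j ∈ s, fS (a j)) = 0) ∧
    coeff s.card (∏ j ∈ s, fS (a j)) = ∏ j ∈ s, (2 * a j) ∧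
    coeff (s.card + 1) (∏ j ∈ s, fS (a j)) = 0 ∧
    coeff (s.card + 2) (∏ j ∈ s, fS (a j)) =
      (∏ j ∈ s, (2 * a j)) * (∑ j ∈ s, (a j) ^ 2) / 6 := by
  induction s using Finset.cons_induction with
  | empty => simp [PowerSeries.coeff_one]
  | cons i s hi ih =>
    obtain ⟨ih1, ih2, ih3, ih4⟩ := ih
    rw [Finset.prod_cons, Finset.card_cons]
    set n := s.card
    set Q := ∏ j ∈ s, fS (a j)
    refine ⟨?_, ?_, ?_, ?_⟩
    · intro m hm
      exact coeff_mul_le_zero _ _ n ih1 (coeff_fS_zero _) m (by omega)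
    · have := coeff_mul_of_lowzero (fS (a i)) Q n ih1 1
      rw [show n + 1 = n + 1 from rfl, this]
      rw [Finset.sum_range_succ, Finset.sum_range_succ, Finset.sum_range_zero]
      simp only [coeff_fS_zero, coeff_fS_one, zero_mul, zero_add]
      rw [show n + 1 - 1 = n from rfl, ih2, Finset.prod_cons]
    · have := coeff_mul_of_lowzero (fS (a i)) Q n ih1 2
      rw [show n + 1 + 1 = n + 2 from rfl, this]
      rw [Finset.sum_range_succ, Finset.sum_range_succ, Finset.sum_range_succ,
        Finset.sum_range_zero]
      simp only [coeff_fS_zero, coeff_fS_one, coeff_fS_two, zero_mul, zero_add]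
      rw [show n + 2 - 1 = n + 1 from rfl, ih3]
      ring
    · have := coeff_mul_of_lowzero (fS (a i)) Q n ih1 3
      rw [show n + 1 + 2 = n + 3 from rfl, this]
      rw [Finset.sum_range_succ, Finset.sum_range_succ, Finset.sum_range_succ,
        Finset.sum_range_succ, Finset.sum_range_zero]
      simp only [coeff_fS_zero, coeff_fS_one, coeff_fS_two, coeff_fS_three, zero_mul,
        zero_add, mul_zero, add_zero]
      rw [show n + 3 - 1 = n + 2 from rfl, show n + 3 - 3 = n from rfl, ih4, ih2,
        Finset.prod_cons, Finset.sum_cons]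
      ring

lemma pair_sum {ℓ : ℕ} (x : Fin ℓ → ℚ) :
    ∑ i, ∑ j ∈ univ.filter (fun j => i < j), (x i + x j)
      = ((ℓ : ℚ) - 1) * ∑ i, x i := by
  have h1 : ∀ i : Fin ℓ, (∑ j ∈ univ.filter (fun j => i < j), (x i + x j))
      = ∑ j : Fin ℓ, (if i < j then x i + x j else 0) := by
    intro i; rw [Finset.sum_filter]
  have key : (∑ i, ∑ j ∈ univ.filter (fun j => i < j), (x i + x j)) * 2
      = ∑ i : Fin ℓ, ∑ j : Fin ℓ, (if i = j then 0 else x i + x j) := by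
    rw [mul_two]
    conv_lhs =>
      rw [Finset.sum_congr rfl (fun i _ => h1 i)]
    nth_rewrite 2 [Finset.sum_comm]
    rw [← Finset.sum_add_distrib]
    apply Finset.sum_congr rfl
    intro i _
    rw [← Finset.sum_add_distrib]
    apply Finset.sum_congr rfl
    intro j _
    rcases lt_trichotomy i j with h | h | h
    · rw [if_pos h, if_neg (not_lt.mpr h.le), if_neg h.ne, add_zero]
    · subst h; simp
    · rw [if_neg (not_lt.mpr h.le), if_pos h, if_neg h.ne', zero_add, add_comm]
  have h2 : ∀ i : Fin ℓ, ∑ j : Fin ℓ, (if i = j then 0 else x i + x j)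
      = ((ℓ:ℚ) * x i + ∑ j : Fin ℓ, x j) - (x i + x i) := by
    intro i
    have : ∀ j : Fin ℓ, (if i = j then 0 else x i + x j)
        = (x i + x j) - (if i = j then x i + x j else 0) := by
      intro j; by_cases h : i = j <;> simp [h]
    rw [Finset.sum_congr rfl (fun j _ => this j), Finset.sum_sub_distrib,
      Finset.sum_add_distrib, Finset.sum_ite_eq _ i (fun j => x i + x j),
      if_pos (Finset.mem_univ i), Finset.sum_const, Finset.card_univ, Fintype.card_fin,
      nsmul_eq_mul]
  have expand : ∑ i : Fin ℓ, ∑ j : Fin ℓ, (if i = j then 0 else x i + x j)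
      = ((ℓ : ℚ) - 1) * (∑ i, x i) * 2 := by
    rw [Finset.sum_congr rfl (fun i _ => h2 i), Finset.sum_sub_distrib,
      Finset.sum_add_distrib, Finset.sum_add_distrib, ← Finset.mul_sum,
      Finset.sum_const, Finset.card_univ, Fintype.card_fin, nsmul_eq_mul]
    ring
  have h4 := key.trans expand
  linarith [h4]




theorem stmt_2 (ℓ : ℕ) (hℓ : 1 ≤ ℓ) (hℓ24 : ℓ ≤ 24) (k : ℕ) (hk : k = 24 - ℓ)
    (m : ℕ) (hm : 1 ≤ m) (c d : Fin ℓ → ℕ)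
    (hc : ∀ j, 1 ≤ c j) (hd : ∀ j, 1 ≤ d j)
    (hBR : (m : LaurentPolynomial ℤ) *
        ∏ j, (T ((c j : ℤ) * (d j : ℤ)) - T (-((c j : ℤ) * (d j : ℤ)))) =
      (sigma2 (fun j => (d j : ℤ)) +
          ((2 * (k : ℤ) - 1 : ℤ) : LaurentPolynomial ℤ) * sigma1 (fun j => (d j : ℤ)) +
          ((2 * (k : ℤ) ^ 2 - 3 * (k : ℤ) + (ℓ : ℤ) : ℤ) : LaurentPolynomial ℤ)) *
        ∏ j, (T ((d j : ℤ)) - T (-(d j : ℤ)))) :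
    Even (∑ j, (d j) ^ 2) ∧ ∃ N : ℕ, ∑ j, (d j) ^ 2 = 2 * N := by
  classical
  -- notation
  set a : Fin ℓ → ℚ := fun j => (c j : ℚ) * (d j : ℚ) with ha
  set b : Fin ℓ → ℚ := fun j => (d j : ℚ) with hb
  have hkq : (k : ℚ) = 24 - (ℓ : ℚ) := by
    subst hk; push_cast [Nat.cast_sub hℓ24]; ring
  -- coefficients of the two sinh-products
  have hcard : (univ : Finset (Fin ℓ)).card = ℓ := by
    rw [Finset.card_univ, Fintype.card_fin]
  obtain ⟨hPc1, hPc2, hPc3, hPc4⟩ := prod_fS_coeffs a univ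
  obtain ⟨hPd1, hPd2, hPd3, hPd4⟩ := prod_fS_coeffs b univ
  rw [hcard] at hPc1 hPc2 hPc3 hPc4 hPd1 hPd2 hPd3 hPd4
  -- apply BRPhi to hBR
  have hPhiT : ∀ z : ℤ, BRPhi (T z - T (-z)) = fS (z : ℚ) := by
    intro z
    rw [map_sub, BRPhi_T, BRPhi_T, fS, Ee, Ee]
    push_cast
    rfl
  have hPhir : ∀ z : ℤ, BRPhi (rLaurent z) = gS (z : ℚ) := by
    intro z
    rw [rLaurent, map_add, BRPhi_T, BRPhi_T, gS, Ee, Ee]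
    push_cast
    rfl
  have hPS := congrArg BRPhi hBR
  rw [map_mul, map_mul, map_natCast, map_prod, map_prod, map_add, map_add, map_mul,
    map_intCast, map_intCast] at hPS
  rw [Finset.prod_congr rfl (fun j (_ : j ∈ univ) => by
      rw [hPhiT ((c j : ℤ) * (d j : ℤ))]; push_cast; rfl :
      ∀ j ∈ univ, BRPhi (T ((c j : ℤ) * (d j : ℤ)) - T (-((c j : ℤ) * (d j : ℤ))))
        = fS (a j)),
    Finset.prod_congr rfl (fun j (_ : j ∈ univ) => by
      rw [hPhiT ((d j : ℤ))]; push_cast; rfl :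
      ∀ j ∈ univ, BRPhi (T ((d j : ℤ)) - T (-((d j : ℤ)))) = fS (b j))] at hPS
  have hs1 : BRPhi (sigma1 (fun j => (d j : ℤ))) = ∑ j, gS (b j) := by
    rw [sigma1, map_sum]
    exact Finset.sum_congr rfl fun j _ => by rw [hPhir]; push_cast; rfl
  have hs2 : BRPhi (sigma2 (fun j => (d j : ℤ)))
      = ∑ i, ∑ j ∈ univ.filter (fun j => i < j), gS (b i) * gS (b j) := by
    rw [sigma2, map_sum]
    refine Finset.sum_congr rfl fun i _ => ?_
    rw [map_sum]
    exact Finset.sum_congr rfl fun j _ => by rw [map_mul, hPhir, hPhir]; push_cast; rfl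
  rw [hs1, hs2] at hPS
  set Br : PowerSeries ℚ :=
    (∑ i, ∑ j ∈ univ.filter (fun j => i < j), gS (b i) * gS (b j))
      + ((2 * (k : ℤ) - 1 : ℤ) : PowerSeries ℚ) * (∑ j, gS (b j))
      + ((2 * (k : ℤ) ^ 2 - 3 * (k : ℤ) + (ℓ : ℤ) : ℤ) : PowerSeries ℚ) with hBrdef
  -- coefficients of Br
  have hintC : ∀ z : ℤ, ((z : ℤ) : PowerSeries ℚ) = PowerSeries.C (z : ℚ) := by
    intro z; rw [← map_intCast (PowerSeries.C (R := ℚ)) z]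
  have hcoeffBr : ∀ n : ℕ, coeff n Br
      = (∑ i, ∑ j ∈ univ.filter (fun j => i < j), coeff n (gS (b i) * gS (b j)))
        + (2 * (k : ℚ) - 1) * (∑ j, coeff n (gS (b j)))
        + (if n = 0 then (2 * (k : ℚ) ^ 2 - 3 * (k : ℚ) + (ℓ : ℚ)) else 0) := by
    intro n
    rw [hBrdef, map_add, map_add, hintC, hintC, coeff_C_mul, coeff_C, map_sum, map_sum]
    push_cast
    congr 2
    · exact Finset.sum_congr rfl fun i _ => by rw [map_sum]
  have hBr0 : coeff 0 Br = 1080 := by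
    rw [hcoeffBr]
    simp only [coeff_gg_zero, coeff_gS_zero, if_pos rfl]
    have hps := pair_sum (fun _ : Fin ℓ => (2 : ℚ))
    simp only [Finset.sum_const, Finset.card_univ, Fintype.card_fin, nsmul_eq_mul] at hps ⊢
    norm_num at hps ⊢
    rw [hps]
    linear_combination (2 * ((k:ℚ) + (ℓ:ℚ)) + 45) * (by linarith [hkq] : (k:ℚ) + (ℓ:ℚ) - 24 = 0)
  have hBr1 : coeff 1 Br = 0 := by
    rw [hcoeffBr]
    simp [coeff_gg_one, coeff_gS_one]
  have hBr2 : coeff 2 Br = 180 * ∑ j, (b j) ^ 2 := by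
    rw [hcoeffBr]
    simp only [coeff_gg_two, coeff_gS_two, if_neg (by norm_num : ¬ (2:ℕ) = 0), add_zero]
    have hps := pair_sum (fun i : Fin ℓ => 8 * (b i) ^ 2)
    rw [hps, show (∑ i, 8 * b i ^ 2 : ℚ) = 8 * ∑ i, b i ^ 2 from (Finset.mul_sum _ _ _).symm,
      show (∑ j, 4 * b j ^ 2 : ℚ) = 4 * ∑ i, b i ^ 2 from (Finset.mul_sum _ _ _).symm]
    linear_combination 8 * (∑ i, (b i)^2) * (by linarith [hkq] : (k:ℚ) + (ℓ:ℚ) - 24 = 0)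
  have hmC : ((m : ℕ) : PowerSeries ℚ) = PowerSeries.C (m : ℚ) := by
    rw [← map_natCast (PowerSeries.C (R := ℚ)) m]
  rw [hmC] at hPS
  have hEqA := congrArg (coeff ℓ) hPS
  rw [coeff_C_mul, hPc2] at hEqA
  have eA := coeff_mul_of_lowzero Br (∏ j, fS (b j)) ℓ hPd1 0
  rw [Finset.sum_range_one, Nat.add_zero, Nat.sub_zero] at eA
  rw [eA, hBr0, hPd2] at hEqA
  have hEqB := congrArg (coeff (ℓ + 2)) hPS
  rw [coeff_C_mul, hPc4] at hEqB
  have eB := coeff_mul_of_lowzero Br (∏ j, fS (b j)) ℓ hPd1 2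
  rw [Finset.sum_range_succ, Finset.sum_range_succ, Finset.sum_range_one,
    Nat.sub_zero, show ℓ + 2 - 1 = ℓ + 1 from rfl, show ℓ + 2 - 2 = ℓ from rfl] at eB
  rw [eB, hBr0, hBr1, hBr2, hPd4, hPd3, hPd2] at hEqB
  set Dq : ℚ := ∏ j, (2 * b j) with hDqdef
  have hDq : Dq ≠ 0 := by
    rw [hDqdef]
    rw [Finset.prod_ne_zero_iff]
    intro j _
    have := hd j
    simp only [hb]
    positivity
  have hprod : (∏ j, (2 * a j)) = (∏ j, (c j : ℚ)) * Dq := by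
    rw [hDqdef, ← Finset.prod_mul_distrib]
    exact Finset.prod_congr rfl fun j _ => by simp only [ha, hb]; ring
  have hmc : (m : ℚ) * ∏ j, (c j : ℚ) = 1080 := by
    apply mul_right_cancel₀ hDq
    rw [hprod] at hEqA
    linear_combination hEqA
  have hScd : (∑ j, (a j) ^ 2) = 2 * ∑ j, (b j) ^ 2 := by
    apply mul_left_cancel₀ hDq
    rw [hprod] at hEqB
    linear_combination (6 / 1080 : ℚ) * hEqB
      - (Dq * (∑ j, (a j) ^ 2) / 1080) * hmc
  -- sign relation via evaluation at 2 and -2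
  set u2 : ℚˣ := Units.mk0 (2 : ℚ) (by norm_num) with hu2
  set um2 : ℚˣ := Units.mk0 (-2 : ℚ) (by norm_num) with hum2
  have hu2v : (u2 : ℚ) = 2 := rfl
  have hum2v : (um2 : ℚ) = -2 := rfl
  have hfac2 : ∀ n : ℕ, BRev u2 (T (n : ℤ) - T (-(n : ℤ)))
      = (2 : ℚ) ^ n - ((2 : ℚ) ^ n)⁻¹ := by
    intro n
    rw [map_sub, BRev_T, BRev_T, hu2v, zpow_neg, zpow_natCast]
  have hneg1inv : ∀ n : ℕ, (((-1 : ℚ) ^ n)⁻¹) = (-1 : ℚ) ^ n := by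
    intro n
    rcases Nat.even_or_odd n with h | h
    · rw [h.neg_one_pow]; norm_num
    · rw [h.neg_one_pow]; norm_num
  have hfacm2 : ∀ n : ℕ, BRev um2 (T (n : ℤ) - T (-(n : ℤ)))
      = (-1 : ℚ) ^ n * ((2 : ℚ) ^ n - ((2 : ℚ) ^ n)⁻¹) := by
    intro n
    rw [map_sub, BRev_T, BRev_T, hum2v, zpow_neg, zpow_natCast, neg_pow,
      mul_inv, hneg1inv]
    ring
  have hrbr : ∀ z : ℤ, BRev um2 (rLaurent z) = BRev u2 (rLaurent z) := by
    intro z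
    rw [rLaurent, map_add, map_add, BRev_T, BRev_T, BRev_T, BRev_T]
    have h1 : (um2 : ℚ) ^ (2 * z) = (u2 : ℚ) ^ (2 * z) := by
      rw [zpow_mul, zpow_mul, hu2v, hum2v]
      norm_num
    have h2 : (um2 : ℚ) ^ (-(2 * z)) = (u2 : ℚ) ^ (-(2 * z)) := by
      rw [show -(2 * z) = 2 * (-z) by ring, zpow_mul, zpow_mul, hu2v, hum2v]
      norm_num
    rw [h1, h2]
  have hsbr : ∀ x : ℚˣ, BRev x (sigma2 (fun j => (d j : ℤ))
      + ((2 * (k : ℤ) - 1 : ℤ) : LaurentPolynomial ℤ) * sigma1 (fun j => (d j : ℤ))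
      + ((2 * (k : ℤ) ^ 2 - 3 * (k : ℤ) + (ℓ : ℤ) : ℤ) : LaurentPolynomial ℤ))
      = (∑ i, ∑ j ∈ univ.filter (fun j => i < j),
          BRev x (rLaurent (d i : ℤ)) * BRev x (rLaurent (d j : ℤ)))
        + (2 * (k : ℚ) - 1) * (∑ j, BRev x (rLaurent (d j : ℤ)))
        + (2 * (k : ℚ) ^ 2 - 3 * (k : ℚ) + (ℓ : ℚ)) := by
    intro x
    rw [map_add, map_add, map_mul, map_intCast, map_intCast, sigma1, sigma2, map_sum,
      map_sum]
    push_cast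
    congr 2
    · exact Finset.sum_congr rfl fun i _ => by
        rw [map_sum]
        exact Finset.sum_congr rfl fun j _ => map_mul _ _ _
  have hBrSame : BRev um2 (sigma2 (fun j => (d j : ℤ))
      + ((2 * (k : ℤ) - 1 : ℤ) : LaurentPolynomial ℤ) * sigma1 (fun j => (d j : ℤ))
      + ((2 * (k : ℤ) ^ 2 - 3 * (k : ℤ) + (ℓ : ℤ) : ℤ) : LaurentPolynomial ℤ))
      = BRev u2 (sigma2 (fun j => (d j : ℤ))
      + ((2 * (k : ℤ) - 1 : ℤ) : LaurentPolynomial ℤ) * sigma1 (fun j => (d j : ℤ))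
      + ((2 * (k : ℤ) ^ 2 - 3 * (k : ℤ) + (ℓ : ℤ) : ℤ) : LaurentPolynomial ℤ)) := by
    rw [hsbr, hsbr]
    congr 2
    · exact Finset.sum_congr rfl fun i _ => Finset.sum_congr rfl fun j _ => by
        rw [hrbr, hrbr]
    · congr 1
      exact Finset.sum_congr rfl fun j _ => by rw [hrbr]
  -- evaluate hBR at 2 and -2
  have hev2 := congrArg (BRev u2) hBR
  have hevm2 := congrArg (BRev um2) hBR
  rw [map_mul, map_mul, map_natCast] at hev2 hevm2
  rw [hBrSame] at hevm2
  rw [map_prod, map_prod] at hev2 hevm2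
  have hcfac : ∀ j : Fin ℓ, (T ((c j : ℤ) * (d j : ℤ)) - T (-((c j : ℤ) * (d j : ℤ)))
      : LaurentPolynomial ℤ) = T (((c j * d j : ℕ) : ℤ)) - T (-((c j * d j : ℕ) : ℤ)) := by
    intro j; push_cast; ring_nf
  rw [Finset.prod_congr rfl (fun j (_ : j ∈ univ) => by rw [hcfac j, hfac2] :
      ∀ j ∈ univ, BRev u2 (T ((c j : ℤ) * (d j : ℤ)) - T (-((c j : ℤ) * (d j : ℤ))))
        = (2:ℚ) ^ (c j * d j) - ((2:ℚ) ^ (c j * d j))⁻¹),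
    Finset.prod_congr rfl (fun j (_ : j ∈ univ) => by rw [hfac2] :
      ∀ j ∈ univ, BRev u2 (T ((d j : ℤ)) - T (-(d j : ℤ)))
        = (2:ℚ) ^ (d j) - ((2:ℚ) ^ (d j))⁻¹)] at hev2
  rw [Finset.prod_congr rfl (fun j (_ : j ∈ univ) => by rw [hcfac j, hfacm2] :
      ∀ j ∈ univ, BRev um2 (T ((c j : ℤ) * (d j : ℤ)) - T (-((c j : ℤ) * (d j : ℤ))))
        = (-1:ℚ) ^ (c j * d j) * ((2:ℚ) ^ (c j * d j) - ((2:ℚ) ^ (c j * d j))⁻¹)),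
    Finset.prod_congr rfl (fun j (_ : j ∈ univ) => by rw [hfacm2] :
      ∀ j ∈ univ, BRev um2 (T ((d j : ℤ)) - T (-(d j : ℤ)))
        = (-1:ℚ) ^ (d j) * ((2:ℚ) ^ (d j) - ((2:ℚ) ^ (d j))⁻¹))] at hevm2
  rw [Finset.prod_mul_distrib, Finset.prod_mul_distrib, Finset.prod_pow_eq_pow_sum,
    Finset.prod_pow_eq_pow_sum] at hevm2
  have htpos : ∀ n : ℕ, 1 ≤ n → (0 : ℚ) < 2 ^ n - ((2 : ℚ) ^ n)⁻¹ := by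
    intro n hn
    have h1 : (1 : ℚ) < 2 ^ n := one_lt_pow₀ (by norm_num) (by omega)
    have h2 : ((2 : ℚ) ^ n)⁻¹ < 1 := by
      rw [inv_lt_one_iff₀]; right; exact h1
    linarith
  have hPtc : (0 : ℚ) < ∏ j, ((2:ℚ) ^ (c j * d j) - ((2:ℚ) ^ (c j * d j))⁻¹) :=
    Finset.prod_pos fun j _ => htpos _ (Nat.one_le_iff_ne_zero.mpr
      (Nat.mul_ne_zero (by have := hc j; omega) (by have := hd j; omega)))
  have hmne : ((m : ℚ)) * ∏ j, ((2:ℚ) ^ (c j * d j) - ((2:ℚ) ^ (c j * d j))⁻¹) ≠ 0 := by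
    have : (0:ℚ) < m := by exact_mod_cast hm
    positivity
  have hsign : ((-1 : ℚ)) ^ (∑ j, c j * d j) = (-1 : ℚ) ^ (∑ j, d j) := by
    apply mul_left_cancel₀ hmne
    calc ((m:ℚ) * ∏ j, ((2:ℚ) ^ (c j * d j) - ((2:ℚ) ^ (c j * d j))⁻¹))
          * (-1:ℚ) ^ (∑ j, c j * d j)
        = (m:ℚ) * ((-1:ℚ) ^ (∑ j, c j * d j)
            * ∏ j, ((2:ℚ) ^ (c j * d j) - ((2:ℚ) ^ (c j * d j))⁻¹)) := by ring
      _ = BRev u2 (sigma2 (fun j => (d j : ℤ))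
            + ((2 * (k : ℤ) - 1 : ℤ) : LaurentPolynomial ℤ) * sigma1 (fun j => (d j : ℤ))
            + ((2 * (k : ℤ) ^ 2 - 3 * (k : ℤ) + (ℓ : ℤ) : ℤ) : LaurentPolynomial ℤ))
          * ((-1:ℚ) ^ (∑ j, d j) * ∏ j, ((2:ℚ) ^ (d j) - ((2:ℚ) ^ (d j))⁻¹)) := hevm2
      _ = ((-1:ℚ) ^ (∑ j, d j)) * (BRev u2 (sigma2 (fun j => (d j : ℤ))
            + ((2 * (k : ℤ) - 1 : ℤ) : LaurentPolynomial ℤ) * sigma1 (fun j => (d j : ℤ))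
            + ((2 * (k : ℤ) ^ 2 - 3 * (k : ℤ) + (ℓ : ℤ) : ℤ) : LaurentPolynomial ℤ))
          * ∏ j, ((2:ℚ) ^ (d j) - ((2:ℚ) ^ (d j))⁻¹)) := by ring
      _ = ((-1:ℚ) ^ (∑ j, d j)) * ((m:ℚ)
          * ∏ j, ((2:ℚ) ^ (c j * d j) - ((2:ℚ) ^ (c j * d j))⁻¹)) := by rw [← hev2]
      _ = ((m:ℚ) * ∏ j, ((2:ℚ) ^ (c j * d j) - ((2:ℚ) ^ (c j * d j))⁻¹))
          * (-1:ℚ) ^ (∑ j, d j) := by ring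
  have hpar : (∑ j, c j * d j) % 2 = (∑ j, d j) % 2 := by
    rcases Nat.even_or_odd (∑ j, c j * d j) with hA | hA <;>
      rcases Nat.even_or_odd (∑ j, d j) with hB | hB
    · rw [Nat.even_iff] at hA hB; omega
    · exfalso
      rw [hA.neg_one_pow, hB.neg_one_pow] at hsign
      norm_num at hsign
    · exfalso
      rw [hA.neg_one_pow, hB.neg_one_pow] at hsign
      norm_num at hsign
    · rw [Nat.odd_iff] at hA hB; omega
  -- final arithmetic in ℕ
  have hA2 : ∑ j, (c j * d j) ^ 2 = 2 * ∑ j, (d j) ^ 2 := by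
    have h := hScd
    simp only [ha, hb] at h
    exact_mod_cast h
  have hAB1 : 2 ∣ (∑ j, (c j * d j) ^ 2 + ∑ j, c j * d j) := by
    rw [← Finset.sum_add_distrib]
    apply Finset.dvd_sum
    intro j _
    have h : (c j * d j) ^ 2 + c j * d j = (c j * d j) * (c j * d j + 1) := by ring
    rw [h]
    exact (Nat.even_mul_succ_self _).two_dvd
  have hAB2 : 2 ∣ (∑ j, (d j) ^ 2 + ∑ j, d j) := by
    rw [← Finset.sum_add_distrib]
    apply Finset.dvd_sum
    intro j _
    have h : (d j) ^ 2 + d j = (d j) * (d j + 1) := by ring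
    rw [h]
    exact (Nat.even_mul_succ_self _).two_dvd
  have hfin : 2 ∣ ∑ j, (d j) ^ 2 := by omega
  obtain ⟨N, hN⟩ := hfin
  exact ⟨⟨N, by omega⟩, N, hN⟩
end BRaux
end

section
/- Fix c ∈ ℕ^{24} with all c_j ≥ 1 and ∏_{j=1}^{24} c_j = 1080. If d ∈ ℤ^{24} satisfies equation (BR24), then ∑_{j=1}^{24} c_j² d_j² = 2 · ∑_{j=1}^{24} d_j². -/
open LaurentPolynomial Finset

/-- Equation (BR24):
`(∏_{j : d_j = 0} c_j) · ∏_{j : d_j ≠ 0} (X^{c_j d_j} − X^{-c_j d_j})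
   = (σ₂(d) − σ₁(d) + 24) · ∏_{j : d_j ≠ 0} (X^{d_j} − X^{-d_j})` in `ℤ[X, X⁻¹]`. -/
noncomputable def BR24 (c : Fin 24 → ℕ) (d : Fin 24 → ℤ) : Prop :=
  ((∏ j ∈ univ.filter (fun j => d j = 0), c j : ℕ) : LaurentPolynomial ℤ) *
      ∏ j ∈ univ.filter (fun j => d j ≠ 0),
        (T ((c j : ℤ) * d j) - T (-((c j : ℤ) * d j))) =
    (sigma2 d - sigma1 d + 24) *
      ∏ j ∈ univ.filter (fun j => d j ≠ 0), (T (d j) - T (-(d j)))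

/-! ### Auxiliary: the ring `A = ℚ[X]/(X³)` and the evaluation `T n ↦ (1+x)^n`. -/

noncomputable def Aring : Type := Polynomial ℚ ⧸ Ideal.span {(Polynomial.X : Polynomial ℚ) ^ 3}

noncomputable instance : CommRing Aring := inferInstanceAs (CommRing (Polynomial ℚ ⧸ Ideal.span {(Polynomial.X : Polynomial ℚ) ^ 3}))
noncomputable instance : Algebra ℤ Aring := inferInstanceAs (Algebra ℤ (Polynomial ℚ ⧸ Ideal.span {(Polynomial.X : Polynomial ℚ) ^ 3}))
noncomputable instance : Algebra ℚ Aring := inferInstanceAs (Algebra ℚ (Polynomial ℚ ⧸ Ideal.span {(Polynomial.X : Polynomial ℚ) ^ 3}))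

/-- The constants `ℚ → A`. -/
noncomputable def κ : ℚ →+* Aring :=
  (Ideal.Quotient.mk (Ideal.span {(Polynomial.X : Polynomial ℚ) ^ 3})).comp Polynomial.C

/-- The image of `X` in `A`. -/
noncomputable def xA : Aring :=
  Ideal.Quotient.mk (Ideal.span {(Polynomial.X : Polynomial ℚ) ^ 3}) Polynomial.X

lemma xA_cube : xA ^ 3 = 0 := by
  have h : Ideal.Quotient.mk (Ideal.span {(Polynomial.X : Polynomial ℚ) ^ 3})
      ((Polynomial.X : Polynomial ℚ) ^ 3) = 0 :=
    Ideal.Quotient.eq_zero_iff_mem.2 (Ideal.mem_span_singleton_self _)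
  rw [map_pow] at h
  exact h

lemma xA_four : xA ^ 4 = 0 := by
  have h : xA ^ 4 = xA ^ 3 * xA := by ring
  rw [h, xA_cube, zero_mul]

lemma quadmul (a b c a' b' c' : Aring) :
    (a + b * xA + c * xA ^ 2) * (a' + b' * xA + c' * xA ^ 2) =
      a * a' + (a * b' + b * a') * xA + (a * c' + b * b' + c * a') * xA ^ 2 := by
  linear_combination (b * c' + c * b' + c * c' * xA) * xA_cube

/-- `f n = (1+x)^n` truncated: `1 + n x + (n²-n)/2 x²`. -/
noncomputable def fA (n : ℤ) : Aring :=
  1 + κ (n : ℚ) * xA + κ (((n : ℚ) ^ 2 - (n : ℚ)) / 2) * xA ^ 2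

lemma fA_zero : fA 0 = 1 := by
  simp [fA]

lemma fA_mul (m n : ℤ) : fA m * fA n = fA (m + n) := by
  unfold fA
  rw [show (1 : Aring) = κ 1 by simp, quadmul]
  have h1 : κ (1:ℚ) * κ (1:ℚ) = κ 1 := by rw [← map_mul]; norm_num
  have h2 : κ (1:ℚ) * κ ((n:ℚ)) + κ ((m:ℚ)) * κ (1:ℚ) = κ (((m + n : ℤ) : ℚ)) := by
    rw [← map_mul, ← map_mul, ← map_add]; congr 1; push_cast; ring
  have h3 : κ (1:ℚ) * κ (((n:ℚ) ^ 2 - (n:ℚ)) / 2) + κ ((m:ℚ)) * κ ((n:ℚ)) +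
      κ (((m:ℚ) ^ 2 - (m:ℚ)) / 2) * κ (1:ℚ) =
      κ (((((m + n : ℤ) : ℚ)) ^ 2 - (((m + n : ℤ) : ℚ))) / 2) := by
    rw [← map_mul, ← map_mul, ← map_mul, ← map_add, ← map_add]; congr 1; push_cast; ring
  rw [h1, h2, h3]

noncomputable def ψA : Multiplicative ℤ →* Aring where
  toFun n := fA (Multiplicative.toAdd n)
  map_one' := fA_zero
  map_mul' a b := (fA_mul _ _).symm

/-- The evaluation homomorphism `ℤ[T,T⁻¹] → A`, `T n ↦ fA n`. -/
noncomputable def φA : LaurentPolynomial ℤ →ₐ[ℤ] Aring :=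
  AddMonoidAlgebra.lift ℤ Aring ℤ ψA

lemma phi_T (n : ℤ) : φA (T n) = fA n := by
  have h : (T n : LaurentPolynomial ℤ) = (AddMonoidAlgebra.single n 1 : AddMonoidAlgebra ℤ ℤ) := rfl
  rw [h, φA, AddMonoidAlgebra.lift_single]
  simp [ψA]

/-- Extraction of the `x²` coefficient. -/
lemma x2_inj {a b : ℚ} (h : κ a * xA ^ 2 = κ b * xA ^ 2) : a = b := by
  have h' : Ideal.Quotient.mk (Ideal.span {(Polynomial.X : Polynomial ℚ) ^ 3})
      (Polynomial.C a * Polynomial.X ^ 2) =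
      Ideal.Quotient.mk (Ideal.span {(Polynomial.X : Polynomial ℚ) ^ 3})
      (Polynomial.C b * Polynomial.X ^ 2) := by
    rw [map_mul, map_mul]
    exact h
  have hmem := Ideal.Quotient.eq.mp h'
  rw [Ideal.mem_span_singleton] at hmem
  rw [Polynomial.X_pow_dvd_iff] at hmem
  have h2 := hmem 2 (by norm_num)
  simpa [Polynomial.coeff_C_mul, Polynomial.coeff_X_pow, sub_eq_zero] using h2

/-! ### The geometric factor -/

noncomputable def Gg (c : ℕ) (m : ℤ) : LaurentPolynomial ℤ :=
  ∑ k ∈ range c, T (((c : ℤ) - 1 - 2 * k) * m)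

lemma geom (c : ℕ) (m : ℤ) :
    T ((c : ℤ) * m) - T (-((c : ℤ) * m)) = (T m - T (-m)) * Gg c m := by
  induction c with
  | zero => simp [Gg]
  | succ n ih =>
    have hG : Gg (n + 1) m = T m * Gg n m + T (-((n : ℤ) * m)) := by
      unfold Gg
      rw [Finset.sum_range_succ, Finset.mul_sum]
      congr 1
      · apply Finset.sum_congr rfl; intro k hk
        rw [← T_add]; congr 1; push_cast; ring
      · congr 1; push_cast; ring
    have e1 : (T (((n:ℤ) + 1) * m) : LaurentPolynomial ℤ) = T m * T ((n:ℤ) * m) := by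
      rw [← T_add]; congr 1; ring
    have e2 : (T (-(((n:ℤ) + 1) * m)) : LaurentPolynomial ℤ) = T (-m) * T (-((n:ℤ) * m)) := by
      rw [← T_add]; congr 1; ring
    have hcast : ((n + 1 : ℕ) : ℤ) = (n : ℤ) + 1 := by push_cast; ring
    rw [hcast, hG]
    linear_combination T m * ih + e1 - e2

lemma Tsub_ne {a : ℤ} (ha : a ≠ 0) : (T a - T (-a) : LaurentPolynomial ℤ) ≠ 0 := by
  rw [sub_ne_zero]
  intro h
  have h' : (AddMonoidAlgebra.single a 1 : AddMonoidAlgebra ℤ ℤ) = AddMonoidAlgebra.single (-a) 1 := h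
  rcases AddMonoidAlgebra.single_inj.1 h' with ⟨h1, -⟩ | ⟨h1, -⟩
  · omega
  · exact one_ne_zero h1

/-! ### Sum identities -/

lemma sum_lin (c : ℕ) : ∑ k ∈ range c, ((c : ℤ) - 1 - 2 * k) = 0 := by
  induction c with
  | zero => simp
  | succ n ih =>
    rw [Finset.sum_range_succ]
    have h : ∀ k ∈ range n, (((n+1 : ℕ) : ℤ) - 1 - 2 * k) = ((n : ℤ) - 1 - 2 * k) + 1 := by
      intro k hk; push_cast; ring
    rw [Finset.sum_congr rfl h, Finset.sum_add_distrib, ih, Finset.sum_const]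
    push_cast; simp; ring

lemma sum_sq (c : ℕ) : 3 * ∑ k ∈ range c, ((c : ℤ) - 1 - 2 * k) ^ 2 = (c : ℤ) ^ 3 - c := by
  induction c with
  | zero => simp
  | succ n ih =>
    rw [Finset.sum_range_succ]
    have h : ∀ k ∈ range n, (((n+1 : ℕ) : ℤ) - 1 - 2 * k) ^ 2 =
        ((n : ℤ) - 1 - 2 * k) ^ 2 + 2 * ((n : ℤ) - 1 - 2 * k) + 1 := by
      intro k hk; push_cast; ring
    rw [Finset.sum_congr rfl h, Finset.sum_add_distrib, Finset.sum_add_distrib,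
      ← Finset.mul_sum, sum_lin n, Finset.sum_const, Finset.card_range]
    push_cast
    linear_combination ih

/-! ### Images under φA -/

lemma phi_G (c : ℕ) (m : ℤ) :
    φA (Gg c m) = κ (c : ℚ) + κ ((m : ℚ) ^ 2 * ((c : ℚ) ^ 3 - (c : ℚ)) / 6) * xA ^ 2 := by
  have h2 : (∑ k ∈ range c, ((c:ℚ) - 1 - 2*(k:ℚ))^2) = ((c:ℚ)^3 - c)/3 := by
    have h3 : ((3 * ∑ k ∈ range c, ((c : ℤ) - 1 - 2 * k) ^ 2 : ℤ) : ℚ)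
        = (((c:ℤ)^3 - c : ℤ) : ℚ) := by exact_mod_cast congrArg (fun z : ℤ => (z:ℚ)) (sum_sq c)
    push_cast at h3
    linarith
  have h0 : (∑ k ∈ range c, ((c:ℚ) - 1 - 2*(k:ℚ))) = 0 := by
    have h3 : ((∑ k ∈ range c, ((c : ℤ) - 1 - 2 * k) : ℤ) : ℚ) = ((0:ℤ):ℚ) := by
      exact_mod_cast congrArg (fun z : ℤ => (z:ℚ)) (sum_lin c)
    push_cast at h3
    linarith
  rw [Gg, map_sum]
  simp only [phi_T]
  unfold fA
  rw [Finset.sum_add_distrib, Finset.sum_add_distrib, ← Finset.sum_mul, ← Finset.sum_mul,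
    ← map_sum, ← map_sum, Finset.sum_const, Finset.card_range]
  have hl : κ (∑ x ∈ range c, ((((c:ℤ) - 1 - 2 * (x:ℤ)) * m : ℤ) : ℚ)) = κ 0 := by
    congr 1
    push_cast
    rw [← Finset.sum_mul, h0, zero_mul]
  have hq : κ (∑ x ∈ range c, (((((c:ℤ) - 1 - 2 * (x:ℤ)) * m : ℤ) : ℚ) ^ 2 -
      ((((c:ℤ) - 1 - 2 * (x:ℤ)) * m : ℤ) : ℚ)) / 2) = κ ((m:ℚ) ^ 2 * ((c:ℚ) ^ 3 - (c:ℚ)) / 6) := by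
    congr 1
    push_cast
    calc (∑ x ∈ range c, ((((c:ℚ) - 1 - 2 * (x:ℚ)) * (m:ℚ)) ^ 2 -
            ((c:ℚ) - 1 - 2 * (x:ℚ)) * (m:ℚ)) / 2)
        = ∑ x ∈ range c, (((m:ℚ) ^ 2 / 2) * ((c:ℚ) - 1 - 2 * (x:ℚ)) ^ 2 -
            ((m:ℚ) / 2) * ((c:ℚ) - 1 - 2 * (x:ℚ))) :=
          Finset.sum_congr rfl (fun k _ => by ring)
      _ = (m:ℚ) ^ 2 * ((c:ℚ) ^ 3 - (c:ℚ)) / 6 := by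
          rw [Finset.sum_sub_distrib, ← Finset.mul_sum, ← Finset.mul_sum, h2, h0]
          ring
  rw [hl, hq, map_zero, zero_mul, add_zero]
  congr 1
  rw [nsmul_eq_mul, mul_one]
  exact (map_natCast κ c).symm

lemma phi_G_fac (c : ℕ) (m : ℤ) :
    φA (Gg c m) = κ (c : ℚ) * (1 + κ ((m : ℚ) ^ 2 * ((c : ℚ) ^ 2 - 1) / 6) * xA ^ 2) := by
  rw [phi_G, mul_add, mul_one, ← mul_assoc, ← map_mul]
  have h : (c : ℚ) * ((m : ℚ) ^ 2 * ((c : ℚ) ^ 2 - 1) / 6) =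
      (m : ℚ) ^ 2 * ((c : ℚ) ^ 3 - (c : ℚ)) / 6 := by ring
  rw [h]

lemma prod_one_add {ι : Type*} (s : Finset ι) (t : ι → ℚ) :
    ∏ j ∈ s, (1 + κ (t j) * xA ^ 2) = 1 + κ (∑ j ∈ s, t j) * xA ^ 2 := by
  induction s using Finset.cons_induction with
  | empty => simp
  | cons j s hj ih =>
    rw [Finset.prod_cons, ih, Finset.sum_cons, map_add]
    linear_combination (κ (t j) * κ (∑ j ∈ s, t j)) * xA_four

lemma phi_r (a : ℤ) : φA (rLaurent a) = 2 + κ (4 * (a : ℚ) ^ 2) * xA ^ 2 := by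
  rw [rLaurent, map_add, phi_T, phi_T]
  unfold fA
  have hAC : κ (((2 * a : ℤ) : ℚ)) + κ (((-(2 * a) : ℤ) : ℚ)) = 0 := by
    rw [← map_add]; push_cast; norm_num
  have hBD : κ (((((2 * a : ℤ) : ℚ)) ^ 2 - ((2 * a : ℤ) : ℚ)) / 2) +
      κ (((((-(2 * a) : ℤ) : ℚ)) ^ 2 - ((-(2 * a) : ℤ) : ℚ)) / 2) = κ (4 * (a : ℚ) ^ 2) := by
    rw [← map_add]; congr 1; push_cast; ring
  linear_combination xA * hAC + xA ^ 2 * hBD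

lemma sq_expand (u : ℚ) : (2 + κ u * xA ^ 2) ^ 2 = 4 + 4 * κ u * xA ^ 2 := by
  linear_combination (κ u) ^ 2 * xA_four

lemma phi_sigma1 {ℓ : ℕ} (d : Fin ℓ → ℤ) :
    φA (sigma1 d) = 2 * (ℓ : Aring) + κ (4 * ∑ j, (d j : ℚ) ^ 2) * xA ^ 2 := by
  rw [sigma1, map_sum]
  simp only [phi_r]
  rw [Finset.sum_add_distrib, ← Finset.sum_mul, ← map_sum, Finset.sum_const, Finset.card_univ,
    Fintype.card_fin]
  congr 1
  · rw [nsmul_eq_mul]; ring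
  · congr 2
    rw [Finset.mul_sum]

lemma phi_rsq_sum {ℓ : ℕ} (d : Fin ℓ → ℤ) :
    φA (∑ j, rLaurent (d j) ^ 2) = 4 * (ℓ : Aring) + 16 * κ (∑ j, (d j : ℚ) ^ 2) * xA ^ 2 := by
  rw [map_sum]
  have h : ∀ j ∈ (univ : Finset (Fin ℓ)), φA (rLaurent (d j) ^ 2)
      = 4 + 4 * κ (4 * (d j : ℚ) ^ 2) * xA ^ 2 := by
    intro j _
    rw [map_pow, phi_r, sq_expand]
  rw [Finset.sum_congr rfl h, Finset.sum_add_distrib, Finset.sum_const, Finset.card_univ,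
    Fintype.card_fin, ← Finset.sum_mul]
  congr 1
  · rw [nsmul_eq_mul]; ring
  · congr 1
    rw [← Finset.mul_sum, ← map_sum]
    have h2 : (∑ j, 4 * (d j : ℚ) ^ 2) = 4 * ∑ j, (d j : ℚ) ^ 2 := by rw [Finset.mul_sum]
    rw [h2, map_mul, map_ofNat]
    ring

lemma sigma_sq {ℓ : ℕ} (d : Fin ℓ → ℤ) :
    sigma1 d ^ 2 = 2 * sigma2 d + ∑ j, rLaurent (d j) ^ 2 := by
  have expand : sigma1 d ^ 2 = ∑ i, ∑ j, rLaurent (d i) * rLaurent (d j) := by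
    rw [sigma1, sq, Finset.sum_mul_sum]
  have swap : sigma2 d = ∑ i, ∑ j ∈ univ.filter (fun j => j < i),
      rLaurent (d j) * rLaurent (d i) := by
    unfold sigma2
    exact Finset.sum_comm' (fun i j => by simp)
  have hs2 : sigma2 d = ∑ i, ∑ j ∈ univ.filter (fun j => i < j),
      rLaurent (d i) * rLaurent (d j) := rfl
  have split : ∀ i, (∑ j, rLaurent (d i) * rLaurent (d j)) =
      (∑ j ∈ univ.filter (fun j => i < j), rLaurent (d i) * rLaurent (d j)) +
      ((∑ j ∈ univ.filter (fun j => j < i), rLaurent (d i) * rLaurent (d j)) +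
        rLaurent (d i) ^ 2) := by
    intro i
    rw [← Finset.sum_filter_add_sum_filter_not univ (fun j => i < j)
        (fun j => rLaurent (d i) * rLaurent (d j))]
    congr 1
    have hset : univ.filter (fun j => ¬ i < j) = insert i (univ.filter (fun j => j < i)) := by
      ext j
      simp only [Finset.mem_filter, Finset.mem_univ, true_and, Finset.mem_insert, not_lt]
      constructor
      · intro hji
        rcases lt_or_eq_of_le hji with h | h
        · exact Or.inr h
        · exact Or.inl h
      · rintro (h | h)
        · exact le_of_eq h
        · exact le_of_lt h
    rw [hset, Finset.sum_insert (by simp)]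
    ring
  have hsplit := Finset.sum_congr (rfl : (univ : Finset (Fin ℓ)) = univ) (fun i _ => split i)
  have h2 : (∑ i, ∑ j ∈ univ.filter (fun j => j < i), rLaurent (d i) * rLaurent (d j))
      = sigma2 d := by
    rw [swap]
    exact Finset.sum_congr rfl (fun i _ => Finset.sum_congr rfl (fun j _ => mul_comm _ _))
  rw [expand, hsplit, Finset.sum_add_distrib, Finset.sum_add_distrib, h2, ← hs2]
  ring

set_option maxHeartbeats 1000000 in
theorem stmt_5 (c : Fin 24 → ℕ) (hc : ∀ j, 1 ≤ c j) (hprod : ∏ j, c j = 1080)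
    (d : Fin 24 → ℤ) (hBR : BR24 c d) :
    ∑ j, (c j : ℤ) ^ 2 * (d j) ^ 2 = 2 * ∑ j, (d j) ^ 2 := by
  classical
  -- Step 1: cancel the common factor to get the key identity.
  have key : ((∏ j ∈ univ.filter (fun j => d j = 0), c j : ℕ) : LaurentPolynomial ℤ) *
      ∏ j ∈ univ.filter (fun j => d j ≠ 0), Gg (c j) (d j)
      = sigma2 d - sigma1 d + 24 := by
    have h1 := hBR
    unfold BR24 at h1
    simp only [geom] at h1
    rw [Finset.prod_mul_distrib] at h1
    have hP : (∏ j ∈ univ.filter (fun j => d j ≠ 0), (T (d j) - T (-(d j))) :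
        LaurentPolynomial ℤ) ≠ 0 :=
      Finset.prod_ne_zero_iff.mpr (fun j hj => Tsub_ne ((Finset.mem_filter.mp hj).2))
    apply mul_right_cancel₀ hP
    linear_combination h1
  have key2 : 2 * (((∏ j ∈ univ.filter (fun j => d j = 0), c j : ℕ) : LaurentPolynomial ℤ) *
      ∏ j ∈ univ.filter (fun j => d j ≠ 0), Gg (c j) (d j))
      = sigma1 d ^ 2 - (∑ j, rLaurent (d j) ^ 2) - 2 * sigma1 d + 48 := by
    linear_combination 2 * key - sigma_sq d
  -- Step 2: apply φA.
  have hphi := congrArg φA key2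
  simp only [map_mul, map_sub, map_add, map_pow, map_ofNat] at hphi
  have hNcast : φA (((∏ j ∈ univ.filter (fun j => d j = 0), c j : ℕ) : LaurentPolynomial ℤ))
      = κ (((∏ j ∈ univ.filter (fun j => d j = 0), c j : ℕ) : ℚ)) := by
    rw [map_natCast]
    exact (map_natCast κ _).symm
  have hGprod : φA (∏ j ∈ univ.filter (fun j => d j ≠ 0), Gg (c j) (d j))
      = κ (∏ j ∈ univ.filter (fun j => d j ≠ 0), (c j : ℚ)) *
        (1 + κ (∑ j ∈ univ.filter (fun j => d j ≠ 0),
          (d j : ℚ) ^ 2 * ((c j : ℚ) ^ 2 - 1) / 6) * xA ^ 2) := by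
    rw [map_prod]
    simp only [phi_G_fac]
    rw [Finset.prod_mul_distrib, ← map_prod, prod_one_add]
  rw [hNcast, hGprod, phi_sigma1, phi_rsq_sum] at hphi
  push_cast at hphi
  -- arithmetic facts
  have hpq : κ (∏ j ∈ univ.filter (fun j => d j = 0), (c j : ℚ)) *
      κ (∏ j ∈ univ.filter (fun j => d j ≠ 0), (c j : ℚ)) = 1080 := by
    rw [← map_mul]
    have h1 : (∏ j ∈ univ.filter (fun j => d j = 0), c j) *
        (∏ j ∈ univ.filter (fun j => d j ≠ 0), c j) = 1080 := by
      rw [← hprod]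
      simpa only [ne_eq] using Finset.prod_filter_mul_prod_filter_not univ (fun j => d j = 0) c
    have h2 := congrArg (fun n : ℕ => (n : ℚ)) h1
    push_cast at h2
    rw [h2]
    exact map_ofNat κ 1080
  have hTS0 : (∑ j ∈ univ.filter (fun j => d j ≠ 0), (d j : ℚ) ^ 2 * ((c j : ℚ) ^ 2 - 1) / 6)
      = ∑ j, (d j : ℚ) ^ 2 * ((c j : ℚ) ^ 2 - 1) / 6 := by
    rw [← Finset.sum_filter_add_sum_filter_not univ (fun j => d j ≠ 0)
      (fun j => (d j : ℚ) ^ 2 * ((c j : ℚ) ^ 2 - 1) / 6)]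
    have hz : ∑ j ∈ univ.filter (fun j => ¬ d j ≠ 0),
        (d j : ℚ) ^ 2 * ((c j : ℚ) ^ 2 - 1) / 6 = 0 :=
      Finset.sum_eq_zero (fun j hj => by
        have hdj : d j = 0 := by simpa using (Finset.mem_filter.mp hj).2
        simp [hdj])
    rw [hz, add_zero]
  have hTS := congrArg κ hTS0
  have e3 : κ (4 * ∑ j, (d j : ℚ) ^ 2) = 4 * κ (∑ j, (d j : ℚ) ^ 2) := by
    rw [map_mul, map_ofNat]
  rw [e3] at hphi
  -- Step 3: extract the x² coefficient.
  set W : ℚ := ∑ j, (d j : ℚ) ^ 2 * ((c j : ℚ) ^ 2 - 1) / 6 with hW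
  set U : ℚ := ∑ j ∈ univ.filter (fun j => d j ≠ 0),
    (d j : ℚ) ^ 2 * ((c j : ℚ) ^ 2 - 1) / 6 with hU
  set V : ℚ := ∑ j, (d j : ℚ) ^ 2 with hV
  set Pq : ℚ := ∏ j ∈ univ.filter (fun j => d j = 0), (c j : ℚ) with hPq
  set Qq : ℚ := ∏ j ∈ univ.filter (fun j => d j ≠ 0), (c j : ℚ) with hQq
  have main : 2160 * κ W * xA ^ 2 = 360 * κ V * xA ^ 2 := by
    linear_combination hphi - (2 + 2 * κ U * xA ^ 2) * hpq +
      16 * (κ V) ^ 2 * xA_four - 2160 * xA ^ 2 * hTS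
  have main' : κ (2160 * W) * xA ^ 2 = κ (360 * V) * xA ^ 2 := by
    rw [map_mul, map_ofNat, map_mul, map_ofNat]
    exact main
  have hQ := x2_inj main'
  rw [hW, hV] at hQ
  have hsum : (∑ j, (d j : ℚ) ^ 2 * ((c j : ℚ) ^ 2 - 1) / 6)
      = ((∑ j, (c j : ℚ) ^ 2 * (d j : ℚ) ^ 2) - ∑ j, (d j : ℚ) ^ 2) / 6 := by
    rw [← Finset.sum_sub_distrib, Finset.sum_div]
    exact Finset.sum_congr rfl (fun j _ => by ring)
  have hQ2 : (∑ j, (c j : ℚ) ^ 2 * (d j : ℚ) ^ 2) = 2 * ∑ j, (d j : ℚ) ^ 2 := by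
    linear_combination (1 / 360 : ℚ) * hQ - 6 * hsum
  exact_mod_cast hQ2
end

section
/- Let c* = (5,3,3,3,2,2,2,1,1,1,1,1,1,1,1,1,1,1,1,1,1,1,1,1) ∈ ℕ^{24}. For all α, β ∈ ℤ, the tuple d = Fam2(α,β) = (β, α+β, α, α−β, α+2β, α−2β, 2β, 2α, 2α+2β, 2α+β, 2α−β, 2α−2β, α+3β, α+β, α, 4β, α−β, 3β, 2β, α−3β, β, β, 0, 0) ∈ ℤ^{24} satisfies equation (BR24) with respect to c*. -/
open LaurentPolynomial Finset

/-- The inflation vector `c* = (5,3,3,3,2,2,2,1,…,1)`. -/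
def cstar : Fin 24 → ℕ :=
  ![5, 3, 3, 3, 2, 2, 2, 1, 1, 1, 1, 1, 1, 1, 1, 1, 1, 1, 1, 1, 1, 1, 1, 1]

/-- The family `Fam2`. -/
def Fam2 (α β : ℤ) : Fin 24 → ℤ :=
  ![β, α + β, α, α - β, α + 2 * β, α - 2 * β, 2 * β, 2 * α, 2 * α + 2 * β,
    2 * α + β, 2 * α - β, 2 * α - 2 * β, α + 3 * β, α + β, α, 4 * β, α - β, 3 * β, 2 * β,
    α - 3 * β, β, β, 0, 0]

/-- `Q c d` is the "Chebyshev-like" quotient `(X^{cd} - X^{-cd}) / (X^d - X^{-d})`. -/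
noncomputable def Q (c : ℕ) (d : ℤ) : LaurentPolynomial ℤ :=
  ∑ k ∈ Finset.range c, T (d * ((c : ℤ) - 1 - 2 * k))

lemma Q_zero (c : ℕ) : Q c 0 = (c : LaurentPolynomial ℤ) := by simp [Q]

lemma Q_factor (c : ℕ) (d : ℤ) :
    T ((c : ℤ) * d) - T (-((c : ℤ) * d)) = Q c d * (T d - T (-d)) := by
  induction c with
  | zero => simp [Q]
  | succ n ih =>
    have hQ : Q (n+1) d = T ((n:ℤ) * d) + T (-d) * Q n d := by
      rw [Q, Finset.sum_range_succ', Q, Finset.mul_sum, add_comm]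
      congr 1
      · push_cast; ring_nf
      · apply Finset.sum_congr rfl
        intro k _
        rw [← T_add]
        congr 1
        push_cast
        ring
    rw [hQ, add_mul, mul_assoc, ← ih, mul_sub, mul_sub, ← T_add, ← T_add, ← T_add, ← T_add]
    push_cast
    ring_nf

lemma bridge {ℓ : ℕ} (c : Fin ℓ → ℕ) (d : Fin ℓ → ℤ) :
    ((∏ j ∈ univ.filter (fun j => d j = 0), c j : ℕ) : LaurentPolynomial ℤ) *
      ∏ j ∈ univ.filter (fun j => d j ≠ 0),
        (T ((c j : ℤ) * d j) - T (-((c j : ℤ) * d j))) =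
    (∏ j, Q (c j) (d j)) *
      ∏ j ∈ univ.filter (fun j => d j ≠ 0), (T (d j) - T (-(d j))) := by
  rw [← Finset.prod_filter_mul_prod_filter_not univ (fun j => d j = 0)
      (fun j => Q (c j) (d j))]
  have h1 : ∏ j ∈ univ.filter (fun j => d j = 0), Q (c j) (d j)
      = ((∏ j ∈ univ.filter (fun j => d j = 0), c j : ℕ) : LaurentPolynomial ℤ) := by
    push_cast
    apply Finset.prod_congr rfl
    intro j hj
    rw [Finset.mem_filter] at hj
    rw [hj.2, Q_zero]
  have h2 : ∏ j ∈ univ.filter (fun j => d j ≠ 0),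
        (T ((c j : ℤ) * d j) - T (-((c j : ℤ) * d j)))
      = (∏ j ∈ univ.filter (fun j => ¬ d j = 0), Q (c j) (d j)) *
        ∏ j ∈ univ.filter (fun j => d j ≠ 0), (T (d j) - T (-(d j))) := by
    rw [← Finset.prod_mul_distrib]
    apply Finset.prod_congr rfl
    intro j _
    exact Q_factor _ _
  rw [h1, h2]
  ring

set_option maxHeartbeats 4000000 in
lemma key_s9 (α β : ℤ) :
    (∏ j, Q (cstar j) (Fam2 α β j)) = sigma2 (Fam2 α β) - sigma1 (Fam2 α β) + 24 := by
  simp only [sigma1, sigma2, rLaurent, cstar, Fam2, Q, Fin.prod_univ_succ, Fin.sum_univ_succ,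
    Finset.sum_filter, Fin.sum_univ_zero, Fin.prod_univ_zero, Finset.sum_range_succ,
    Finset.sum_range_zero, Matrix.cons_val_zero, Matrix.cons_val_succ, Fin.succ_zero_eq_one,
    Fin.isValue, zero_add, add_zero, mul_one, one_mul]
  norm_num [Fin.lt_def, T_zero]
  simp only [mul_add, add_mul, sub_mul, mul_sub, ← T_add, mul_one, one_mul]
  ring_nf
  simp only [T_zero]
  ring_nf

theorem stmt_9 (α β : ℤ) : BR24 cstar (Fam2 α β) := by
  unfold BR24
  rw [bridge, key_s9]
end

section
/- For every real z with 0 < |z| < π, one has log( sin(z) / z ) = ∑_{n=1}^{∞} ((−1)^{n+1}/(2n)!) · ζ(1−2n) · (2z)^{2n}, where ζ(1−2n) = −B_{2n}/(2n) is the value of the Riemann zeta function at 1−2n (B_{2n} the 2n-th Bernoulli number); in particular the series on the right converges to the left-hand side. -/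
open Real Filter Topology

/-- For `0 < |z| < π`,
`log(sin z / z) = ∑_{n ≥ 1} ((−1)^{n+1}/(2n)!) · ζ(1−2n) · (2z)^{2n}`,
where `ζ(1−2n) = −B_{2n}/(2n)`; the series converges to the left-hand side.
(The sum is indexed by `m : ℕ` with `n = m + 1`.) -/
theorem stmt_11 (z : ℝ) (h0 : 0 < |z|) (hπ : |z| < Real.pi) :
    HasSum
      (fun m : ℕ =>
        ((-1 : ℝ) ^ ((m + 1) + 1) / (Nat.factorial (2 * (m + 1)))) *
          ((-(bernoulli (2 * (m + 1)) : ℝ)) / (2 * (m + 1))) *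
          (2 * z) ^ (2 * (m + 1)))
      (Real.log (Real.sin z / z)) := by
  have hz : z ≠ 0 := by simpa using h0.ne'
  have hπ0 : (0:ℝ) < Real.pi := Real.pi_pos
  set t : ℝ := z ^ 2 / Real.pi ^ 2 with ht
  have ht0 : 0 < t := div_pos (by positivity) (by positivity)
  have ht1 : t < 1 := by
    rw [div_lt_one (by positivity)]
    calc z ^ 2 = |z| ^ 2 := (sq_abs z).symm
    _ < Real.pi ^ 2 := by
      apply pow_lt_pow_left₀ hπ (abs_nonneg z); norm_num
  set a : ℕ → ℝ := fun k => t / ((k : ℝ) + 1) ^ 2 with ha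
  have ha0 : ∀ k, 0 < a k := fun k => div_pos ht0 (by positivity)
  have ha1 : ∀ k, a k < 1 := fun k =>
    lt_of_le_of_lt (div_le_self ht0.le (by have : (0:ℝ) ≤ (k:ℝ) := Nat.cast_nonneg k; nlinarith)) ht1
  -- sin z / z > 0
  have hsin : 0 < Real.sin z / z := by
    rcases abs_cases z with ⟨he, _⟩ | ⟨he, _⟩
    · have hzpos : 0 < z := by rw [← he]; exact h0
      exact div_pos (Real.sin_pos_of_pos_of_lt_pi hzpos (he ▸ hπ)) hzpos
    · have hzneg : z < 0 := by nlinarith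
      have : 0 < Real.sin (-z) := Real.sin_pos_of_pos_of_lt_pi (by linarith) (by rw [he] at hπ; linarith)
      rw [Real.sin_neg] at this
      exact div_pos_of_neg_of_neg (by linarith) hzneg
  -- Lemma A
  have hA : ∀ k : ℕ, HasSum (fun m : ℕ => -((a k) ^ (m + 1) / (m + 1))) (Real.log (1 - a k)) := by
    intro k
    have := (hasSum_pow_div_log_of_abs_lt_one (x := a k)
      (by rw [abs_of_pos (ha0 k)]; exact ha1 k)).neg
    simpa using this
  -- Lemma B : HasSum (fun k => log (1 - a k)) (log (sin z / z))
  have hB : HasSum (fun k : ℕ => Real.log (1 - a k)) (Real.log (Real.sin z / z)) := by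
    have hx : z = Real.pi * (z / Real.pi) := by field_simp
    have hprod := Real.tendsto_euler_sin_prod (z / Real.pi)
    rw [← hx] at hprod
    have key : Tendsto (fun n : ℕ => ∏ j ∈ Finset.range n, (1 - a j)) atTop
        (𝓝 (Real.sin z / z)) := by
      refine (hprod.div_const z).congr fun n => ?_
      rw [mul_comm, mul_div_assoc, div_self hz, mul_one]
      exact Finset.prod_congr rfl fun j _ => by rw [ha, ht, div_pow]
    have h1a : ∀ j : ℕ, 0 < 1 - a j := fun j => by have := ha1 j; linarith
    have hlog : Tendsto (fun n : ℕ => ∑ j ∈ Finset.range n, Real.log (1 - a j)) atTop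
        (𝓝 (Real.log (Real.sin z / z))) := by
      refine (((Real.continuousAt_log hsin.ne').tendsto).comp key).congr fun n => ?_
      rw [Function.comp_apply, Real.log_prod]
      exact fun j _ => (h1a j).ne'
    have hneg : ∀ k, 0 ≤ -Real.log (1 - a k) := by
      intro k
      have h1 : (1 : ℝ) - a k < 1 := by have := ha0 k; linarith
      have := Real.log_neg (h1a k) h1
      linarith
    have hsummable : Summable (fun k : ℕ => -Real.log (1 - a k)) := by
      apply summable_of_sum_range_le hneg
      intro n
      have hmono : Monotone (fun n : ℕ => ∑ j ∈ Finset.range n, -Real.log (1 - a j)) := by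
        apply monotone_nat_of_le_succ
        intro m
        rw [Finset.sum_range_succ]
        have := hneg m; linarith
      have hlim : Tendsto (fun n : ℕ => ∑ j ∈ Finset.range n, -Real.log (1 - a j)) atTop
          (𝓝 (-Real.log (Real.sin z / z))) := by
        simpa [Finset.sum_neg_distrib] using hlog.neg
      exact hmono.ge_of_tendsto hlim n
    have hsummable' : Summable (fun k : ℕ => Real.log (1 - a k)) := by
      simpa using hsummable.neg
    exact (hsummable'.hasSum_iff_tendsto_nat).2 hlog
  -- Lemma C
  have hzeta : ∀ m : ℕ, HasSum (fun k : ℕ => 1 / ((k : ℝ) + 1) ^ (2 * (m + 1)))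
      ((-1 : ℝ) ^ (m + 1 + 1) * (2 : ℝ) ^ (2 * (m + 1) - 1) * Real.pi ^ (2 * (m + 1)) *
        bernoulli (2 * (m + 1)) / (Nat.factorial (2 * (m + 1)))) := by
    intro m
    have h := hasSum_zeta_nat (k := m + 1) (by omega)
    have h0' : (1 : ℝ) / (0 : ℝ) ^ (2 * (m + 1)) = 0 := by
      rw [zero_pow (by omega)]; simp
    rw [← hasSum_nat_add_iff' 1] at h
    simpa using h
  have hC : ∀ m : ℕ, HasSum (fun k : ℕ => -((a k) ^ (m + 1) / (m + 1)))
      (((-1 : ℝ) ^ ((m + 1) + 1) / (Nat.factorial (2 * (m + 1)))) *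
        ((-(bernoulli (2 * (m + 1)) : ℝ)) / (2 * (m + 1))) *
        (2 * z) ^ (2 * (m + 1))) := by
    intro m
    have h := (hzeta m).mul_left (-(t ^ (m + 1) / (m + 1)))
    have heq : ∀ k : ℕ, -(t ^ (m + 1) / (m + 1)) * (1 / ((k : ℝ) + 1) ^ (2 * (m + 1)))
        = -((a k) ^ (m + 1) / (m + 1)) := by
      intro k
      have hak : a k ^ (m + 1) = t ^ (m + 1) / ((k : ℝ) + 1) ^ (2 * (m + 1)) := by
        simp only [ha]
        rw [div_pow, ← pow_mul]
      rw [hak]; ring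
    rw [show (fun k : ℕ => -((a k) ^ (m + 1) / (m + 1))) = fun k : ℕ =>
      -(t ^ (m + 1) / (m + 1)) * (1 / ((k : ℝ) + 1) ^ (2 * (m + 1))) from (funext fun k => (heq k).symm)]
    convert h using 1
    · rfl
    rw [ht, div_pow, ← pow_mul]
    have hfac : ((Nat.factorial (2 * (m + 1))) : ℝ) ≠ 0 := by positivity
    have hpow : (2:ℝ) ^ (2 * (m + 1) - 1) = 2 ^ (2 * (m + 1)) / 2 := by
      have h21 : 2 * (m + 1) - 1 + 1 = 2 * (m + 1) := by omega
      rw [eq_div_iff (by norm_num : (2:ℝ) ≠ 0), ← pow_succ, h21]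
    rw [hpow]
    rw [mul_pow (2:ℝ) z]
    have hπne : Real.pi ^ (2 * (m+1)) ≠ 0 := by positivity
    field_simp
    ring
  -- assemble
  set g : ℕ × ℕ → ℝ := fun p => -((a p.1) ^ (p.2 + 1) / (p.2 + 1)) with hg
  have hgnn : 0 ≤ fun p : ℕ × ℕ => -g p := by
    intro p
    simp only [hg, neg_neg]
    have := ha0 p.1
    positivity
  have hgsum : Summable g := by
    rw [← summable_neg_iff]
    rw [summable_prod_of_nonneg hgnn]
    constructor
    · intro k
      exact ((hA k).neg).summable
    · apply Summable.congr hB.neg.summable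
      intro k
      rw [← (hA k).neg.tsum_eq]
  have hGT : HasSum g (Real.log (Real.sin z / z)) := by
    have h1 := hgsum.hasSum
    have h2 : HasSum (fun k : ℕ => Real.log (1 - a k)) (∑' p, g p) :=
      h1.prod_fiberwise (fun k => hA k)
    rwa [h2.unique hB] at h1
  have hswap : HasSum (fun p : ℕ × ℕ => g p.swap) (Real.log (Real.sin z / z)) := by
    have := ((Equiv.prodComm ℕ ℕ).hasSum_iff (f := g)).2 hGT
    exact this
  exact hswap.prod_fiberwise (fun m => hC m)
end

section
/- Let c ∈ ℕ^{24} with all c_j ≥ 1 and ∏_{j=1}^{24} c_j = 1080, and let d ∈ ℤ^{24}. For every real z with z ≠ 0 and |z| < 2π / max{ c_j·|d_j| : d_j ≠ 0 } (no upper bound required if all d_j = 0), one has (∏_{j: d_j = 0} c_j) · ∏_{j: d_j ≠ 0} [ sin( (1/2) c_j d_j z ) / sin( (1/2) d_j z ) ] = 1080 · exp( ∑_{n=1}^{∞} ((−1)ⁿ/(2n)!) · ζ(1−2n) · ( ∑_{j=1}^{24} (1 − c_j^{2n}) d_j^{2n} ) · z^{2n} ), where ζ(1−2n) = −B_{2n}/(2n)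 is the value of the Riemann zeta function at 1−2n; in particular the series in the exponent converges for such z. -/
open Finset Real Filter

set_option maxHeartbeats 1000000

noncomputable def zv (k : ℕ) : ℝ :=
  (-1 : ℝ) ^ (k + 1) * (2 : ℝ) ^ (2 * k - 1) * Real.pi ^ (2 * k) *
    (bernoulli (2 * k) : ℝ) / ((2 * k).factorial : ℝ)

lemma hasSum_zv' (k : ℕ) (hk : k ≠ 0) :
    HasSum (fun n : ℕ => 1 / ((n : ℝ) + 1) ^ (2 * k)) (zv k) := by
  have h : HasSum (fun n : ℕ => 1 / (n : ℝ) ^ (2 * k)) (zv k) := hasSum_zeta_nat hk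
  have h0 : (1 : ℝ) / ((0 : ℕ) : ℝ) ^ (2 * k) = 0 := by
    rw [Nat.cast_zero, zero_pow (by omega), div_zero]
  have h2 := (hasSum_nat_add_iff' (f := fun n : ℕ => 1 / (n : ℝ) ^ (2 * k)) 1).2 h
  simp only [Finset.range_one, Finset.sum_singleton, h0, sub_zero] at h2
  refine h2.congr_fun fun n => ?_
  push_cast
  ring_nf

lemma sin_pi_mul_eq_exp {x : ℝ} (hx : |x| < 1) :
    ∃ L : ℝ, HasSum (fun m : ℕ => -(zv (m + 1)) / ((m : ℝ) + 1) * x ^ (2 * (m + 1))) L ∧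
      Real.sin (Real.pi * x) = Real.pi * x * Real.exp L := by
  have hx2 : x ^ 2 < 1 := by nlinarith [sq_abs x, abs_nonneg x]
  have hx2' : (0 : ℝ) ≤ x ^ 2 := sq_nonneg x
  have hk1 : ∀ k : ℕ, (1 : ℝ) ≤ ((k : ℝ) + 1) ^ 2 := by
    intro k
    nlinarith [Nat.cast_nonneg (α := ℝ) k]
  have htnn : ∀ k : ℕ, 0 ≤ x ^ 2 / ((k : ℝ) + 1) ^ 2 := fun k => div_nonneg hx2' (by positivity)
  have htle : ∀ k : ℕ, x ^ 2 / ((k : ℝ) + 1) ^ 2 ≤ x ^ 2 := by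
    intro k
    have := div_le_div_of_nonneg_left hx2' one_pos (hk1 k)
    simpa using this
  have htlt : ∀ k : ℕ, x ^ 2 / ((k : ℝ) + 1) ^ 2 < 1 := fun k => lt_of_le_of_lt (htle k) hx2
  -- log series for each k
  have hlog : ∀ k : ℕ, HasSum
      (fun m : ℕ => -((x ^ 2 / ((k : ℝ) + 1) ^ 2) ^ (m + 1) / ((m : ℝ) + 1)))
      (Real.log (1 - x ^ 2 / ((k : ℝ) + 1) ^ 2)) := by
    intro k
    have habs : |x ^ 2 / ((k : ℝ) + 1) ^ 2| < 1 := by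
      rw [abs_of_nonneg (htnn k)]; exact htlt k
    have h := (Real.hasSum_pow_div_log_of_abs_lt_one habs).neg
    rw [neg_neg] at h
    exact h
  -- summability of the double series
  have hbound : Summable (fun p : ℕ × ℕ => (1 / ((p.1 : ℝ) + 1) ^ 2) * (x ^ 2) ^ (p.2 + 1)) := by
    have h1 : Summable (fun k : ℕ => 1 / ((k : ℝ) + 1) ^ 2) := by
      have := (hasSum_zv' 1 one_ne_zero).summable
      simpa using this
    have h2 : Summable (fun m : ℕ => (x ^ 2) ^ (m + 1)) := by
      have := (summable_geometric_of_lt_one hx2' hx2).mul_left (x ^ 2)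
      refine this.congr fun m => ?_
      rw [pow_succ]; ring
    exact h1.mul_of_nonneg h2 (fun k => by positivity) (fun m => by positivity)
  have hgsummable : Summable
      (fun p : ℕ × ℕ => -((x ^ 2 / ((p.1 : ℝ) + 1) ^ 2) ^ (p.2 + 1) / ((p.2 : ℝ) + 1))) := by
    refine Summable.of_norm_bounded hbound ?_
    rintro ⟨k, m⟩
    simp only [norm_neg, Real.norm_eq_abs]
    rw [abs_of_nonneg (by positivity)]
    have h2 : (x ^ 2 / ((k : ℝ) + 1) ^ 2) ^ (m + 1) / ((m : ℝ) + 1)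
        ≤ (x ^ 2 / ((k : ℝ) + 1) ^ 2) ^ (m + 1) := by
      apply div_le_self (by positivity)
      have : (0:ℝ) ≤ (m : ℝ) := Nat.cast_nonneg m
      linarith
    refine h2.trans ?_
    have h3 : (x ^ 2 / ((k : ℝ) + 1) ^ 2) ^ (m + 1)
        = (1 / ((k : ℝ) + 1) ^ 2) ^ (m + 1) * (x ^ 2) ^ (m + 1) := by
      rw [← mul_pow]; ring_nf
    rw [h3]
    have h4 : (1 / ((k : ℝ) + 1) ^ 2) ^ (m + 1) ≤ (1 / ((k : ℝ) + 1) ^ 2) := by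
      apply pow_le_of_le_one (by positivity) _ (Nat.succ_ne_zero m)
      rw [div_le_one (by positivity)]
      exact hk1 k
    exact mul_le_mul_of_nonneg_right h4 (by positivity)
  obtain ⟨A, hgA⟩ := hgsummable
  -- fiberwise over k : sum of logs
  have hlogsum : HasSum (fun k : ℕ => Real.log (1 - x ^ 2 / ((k : ℝ) + 1) ^ 2)) A :=
    hgA.prod_fiberwise fun k => hlog k
  -- fiberwise over m : the zeta series
  have hswap : HasSum
      (fun p : ℕ × ℕ => -((x ^ 2 / ((p.2 : ℝ) + 1) ^ 2) ^ (p.1 + 1) / ((p.1 : ℝ) + 1))) A := by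
    exact ((Equiv.prodComm ℕ ℕ).hasSum_iff).2 hgA
  have hfiber : ∀ m : ℕ, HasSum
      (fun k : ℕ => -((x ^ 2 / ((k : ℝ) + 1) ^ 2) ^ (m + 1) / ((m : ℝ) + 1)))
      (-(zv (m + 1)) / ((m : ℝ) + 1) * x ^ (2 * (m + 1))) := by
    intro m
    have hz := (hasSum_zv' (m + 1) (Nat.succ_ne_zero m)).mul_left
      (-(x ^ (2 * (m + 1))) / ((m : ℝ) + 1))
    have heq : ∀ k : ℕ,
        -((x ^ 2 / ((k : ℝ) + 1) ^ 2) ^ (m + 1) / ((m : ℝ) + 1))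
          = -(x ^ (2 * (m + 1))) / ((m : ℝ) + 1) * (1 / ((k : ℝ) + 1) ^ (2 * (m + 1))) := by
      intro k
      rw [div_pow, ← pow_mul, ← pow_mul]
      ring
    have hval : -(x ^ (2 * (m + 1))) / ((m : ℝ) + 1) * zv (m + 1)
        = -(zv (m + 1)) / ((m : ℝ) + 1) * x ^ (2 * (m + 1)) := by ring
    rw [hval] at hz
    exact hz.congr_fun heq
  have hzeta : HasSum (fun m : ℕ => -(zv (m + 1)) / ((m : ℝ) + 1) * x ^ (2 * (m + 1))) A :=
    hswap.prod_fiberwise hfiber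
  refine ⟨A, hzeta, ?_⟩
  -- identify the limits
  have hpos : ∀ k : ℕ, 0 < 1 - x ^ 2 / ((k : ℝ) + 1) ^ 2 := fun k => by linarith [htlt k]
  have h1 : Tendsto (fun n : ℕ => ∑ k ∈ Finset.range n,
      Real.log (1 - x ^ 2 / ((k : ℝ) + 1) ^ 2)) atTop (nhds A) :=
    hlogsum.tendsto_sum_nat
  have h2 : Tendsto (fun n : ℕ => Real.pi * x * Real.exp (∑ k ∈ Finset.range n,
      Real.log (1 - x ^ 2 / ((k : ℝ) + 1) ^ 2))) atTop (nhds (Real.pi * x * Real.exp A)) :=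
    ((Real.continuous_exp.tendsto A).comp h1).const_mul _
  have h3 : ∀ n : ℕ, Real.pi * x * Real.exp (∑ k ∈ Finset.range n,
      Real.log (1 - x ^ 2 / ((k : ℝ) + 1) ^ 2))
      = Real.pi * x * ∏ k ∈ Finset.range n, (1 - x ^ 2 / ((k : ℝ) + 1) ^ 2) := by
    intro n
    rw [Real.exp_sum]
    congr 1
    exact Finset.prod_congr rfl fun k _ => Real.exp_log (hpos k)
  rw [funext h3] at h2
  exact tendsto_nhds_unique (Real.tendsto_euler_sin_prod x) h2

lemma ratio_eq (C : ℕ) (hC : 1 ≤ C) {u : ℝ} (hu0 : u ≠ 0) (hu : |u| < Real.pi / C) :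
    ∃ L : ℝ, HasSum (fun m : ℕ => zv (m + 1) / ((m : ℝ) + 1) *
        ((1 - (C : ℝ) ^ (2 * (m + 1))) * (u / Real.pi) ^ (2 * (m + 1)))) L ∧
      Real.sin ((C : ℝ) * u) / Real.sin u = (C : ℝ) * Real.exp L := by
  have hC0 : (0 : ℝ) < C := by exact_mod_cast hC
  have hC1 : (1 : ℝ) ≤ C := by exact_mod_cast hC
  have hpi : (0 : ℝ) < Real.pi := Real.pi_pos
  have huC : |u| * C < Real.pi := (lt_div_iff₀ hC0).1 hu
  have hxC : |(C : ℝ) * (u / Real.pi)| < 1 := by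
    have habs : |(C : ℝ) * (u / Real.pi)| = (C : ℝ) * |u| / Real.pi := by
      rw [abs_mul, abs_of_pos hC0, abs_div, abs_of_pos hpi]; ring
    rw [habs, div_lt_one hpi]; linarith
  have hx1 : |u / Real.pi| < 1 := by
    have h1 : |u| < Real.pi := by nlinarith [abs_nonneg u]
    rw [abs_div, abs_of_pos hpi, div_lt_one hpi]; exact h1
  obtain ⟨L1, h1sum, h1val⟩ := sin_pi_mul_eq_exp hx1
  obtain ⟨L2, h2sum, h2val⟩ := sin_pi_mul_eq_exp hxC
  have hπx : Real.pi * (u / Real.pi) = u := by field_simp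
  have hπCx : Real.pi * ((C : ℝ) * (u / Real.pi)) = (C : ℝ) * u := by field_simp
  rw [hπx] at h1val
  rw [hπCx] at h2val
  refine ⟨L2 - L1, ?_, ?_⟩
  · exact (h2sum.sub h1sum).congr_fun fun m => by rw [mul_pow]; ring
  · rw [h1val, h2val, Real.exp_sub]
    have hexp1 : Real.exp L1 ≠ 0 := (Real.exp_pos L1).ne'
    field_simp

lemma coeff_eq (m : ℕ) (D Z : ℝ) :
    zv (m + 1) / ((m : ℝ) + 1) * ((1 / 2 * D * Z) / Real.pi) ^ (2 * (m + 1)) =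
      ((-1 : ℝ) ^ (m + 1) / ((2 * (m + 1)).factorial : ℝ)) *
        ((-(bernoulli (2 * (m + 1)) : ℝ)) / (2 * ((m : ℝ) + 1))) *
        (D ^ (2 * (m + 1)) * Z ^ (2 * (m + 1))) := by
  have hpi : Real.pi ≠ 0 := Real.pi_ne_zero
  have hfac : ((2 * (m + 1)).factorial : ℝ) ≠ 0 := by
    exact_mod_cast (2 * (m + 1)).factorial_ne_zero
  have hm : ((m : ℝ) + 1) ≠ 0 := by positivity
  have hsub : 2 * (m + 1) - 1 = 2 * m + 1 := by omega
  have hexp : 2 * (m + 1) = 2 * m + 2 := by omega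
  rw [zv, hsub, hexp]
  rw [div_pow, mul_pow, mul_pow]
  rw [div_pow]
  field_simp
  ring

/-- For `c ∈ ℕ²⁴` with all `c_j ≥ 1` and `∏ c_j = 1080`, `d ∈ ℤ²⁴`, and real
`z ≠ 0` with `|z| < 2π/(c_j |d_j|)` for every `j` with `d_j ≠ 0`:
`(∏_{j : d_j = 0} c_j) ∏_{j : d_j ≠ 0} sin(½ c_j d_j z)/sin(½ d_j z)
  = 1080 · exp( ∑_{n ≥ 1} ((−1)ⁿ/(2n)!) ζ(1−2n) (∑_j (1 − c_j^{2n}) d_j^{2n}) z^{2n} )`,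
where `ζ(1−2n) = −B_{2n}/(2n)`; in particular the series in the exponent converges.
(The sum is indexed by `m : ℕ` with `n = m + 1`.) -/
theorem stmt_13 (c : Fin 24 → ℕ) (hc : ∀ j, 1 ≤ c j) (hprod : ∏ j, c j = 1080)
    (d : Fin 24 → ℤ) (z : ℝ) (hz : z ≠ 0)
    (hbound : ∀ j, d j ≠ 0 → |z| < 2 * Real.pi / ((c j : ℝ) * |(d j : ℝ)|)) :
    ∃ S : ℝ,
      HasSum
        (fun m : ℕ =>
          ((-1 : ℝ) ^ (m + 1) / (Nat.factorial (2 * (m + 1)))) *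
            ((-(bernoulli (2 * (m + 1)) : ℝ)) / (2 * (m + 1))) *
            (∑ j, ((1 : ℝ) - (c j : ℝ) ^ (2 * (m + 1))) * (d j : ℝ) ^ (2 * (m + 1))) *
            z ^ (2 * (m + 1))) S ∧
      (∏ j ∈ univ.filter (fun j => d j = 0), (c j : ℝ)) *
          ∏ j ∈ univ.filter (fun j => d j ≠ 0),
            Real.sin ((1 / 2) * (c j : ℝ) * (d j : ℝ) * z) /
              Real.sin ((1 / 2) * (d j : ℝ) * z) =
        1080 * Real.exp S := by
  have hpi : (0 : ℝ) < Real.pi := Real.pi_pos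
  -- per-index data
  have key : ∀ j : Fin 24, ∃ L : ℝ,
      HasSum (fun m : ℕ => zv (m + 1) / ((m : ℝ) + 1) *
        ((1 - (c j : ℝ) ^ (2 * (m + 1))) *
          ((1 / 2 * (d j : ℝ) * z) / Real.pi) ^ (2 * (m + 1)))) L ∧
      (d j = 0 → L = 0) ∧
      (d j ≠ 0 →
        Real.sin ((1 / 2) * (c j : ℝ) * (d j : ℝ) * z) /
          Real.sin ((1 / 2) * (d j : ℝ) * z) = (c j : ℝ) * Real.exp L) := by
    intro j
    by_cases hd : d j = 0
    · refine ⟨0, ?_, fun _ => rfl, fun h => absurd hd h⟩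
      have : ∀ m : ℕ, zv (m + 1) / ((m : ℝ) + 1) *
          ((1 - (c j : ℝ) ^ (2 * (m + 1))) *
            ((1 / 2 * (d j : ℝ) * z) / Real.pi) ^ (2 * (m + 1))) = 0 := by
        intro m
        rw [hd]
        simp [zero_pow (show 2 * (m + 1) ≠ 0 by omega)]
      exact hasSum_zero.congr_fun this
    · have hd1 : (1 : ℝ) ≤ |(d j : ℝ)| := by
        rw [← Int.cast_abs]
        exact_mod_cast Int.one_le_abs hd
      have hc0 : (0 : ℝ) < (c j : ℝ) := by exact_mod_cast (hc j)
      have hu0 : (1 / 2 * (d j : ℝ) * z) ≠ 0 := by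
        apply mul_ne_zero (mul_ne_zero (by norm_num) _) hz
        exact_mod_cast hd
      have hb := hbound j hd
      rw [lt_div_iff₀ (mul_pos hc0 (lt_of_lt_of_le one_pos hd1))] at hb
      have hu : |1 / 2 * (d j : ℝ) * z| < Real.pi / (c j : ℝ) := by
        rw [abs_mul, abs_mul, lt_div_iff₀ hc0]
        have habs : |(1 : ℝ) / 2| = 1 / 2 := by norm_num
        calc |(1 : ℝ) / 2| * |(d j : ℝ)| * |z| * (c j : ℝ)
            = |z| * ((c j : ℝ) * |(d j : ℝ)|) / 2 := by rw [habs]; ring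
          _ < 2 * Real.pi / 2 := by linarith
          _ = Real.pi := by ring
      obtain ⟨L, hL1, hL2⟩ := ratio_eq (c j) (hc j) hu0 hu
      refine ⟨L, hL1, fun h => absurd h hd, fun _ => ?_⟩
      have harg : (1 / 2) * (c j : ℝ) * (d j : ℝ) * z
          = (c j : ℝ) * (1 / 2 * (d j : ℝ) * z) := by ring
      rw [harg]
      exact hL2
  choose L hLsum hLzero hLval using key
  refine ⟨∑ j, L j, ?_, ?_⟩
  · have h := hasSum_sum (fun j (_ : j ∈ (univ : Finset (Fin 24))) => hLsum j)
    refine h.congr_fun fun m => ?_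
    rw [Finset.mul_sum, Finset.sum_mul]
    refine Finset.sum_congr rfl fun j _ => ?_
    have hc := coeff_eq m (d j : ℝ) z
    linear_combination ((c j : ℝ) ^ (2 * (m + 1)) - 1) * hc
  · have hprodratio : ∏ j ∈ univ.filter (fun j => d j ≠ 0),
        Real.sin ((1 / 2) * (c j : ℝ) * (d j : ℝ) * z) /
          Real.sin ((1 / 2) * (d j : ℝ) * z)
        = (∏ j ∈ univ.filter (fun j => d j ≠ 0), (c j : ℝ)) *
          Real.exp (∑ j ∈ univ.filter (fun j => d j ≠ 0), L j) := by
      rw [Real.exp_sum, ← Finset.prod_mul_distrib]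
      exact Finset.prod_congr rfl fun j hj => hLval j (Finset.mem_filter.1 hj).2
    have hsumL : ∑ j ∈ univ.filter (fun j => d j ≠ 0), L j = ∑ j, L j := by
      apply Finset.sum_subset (Finset.filter_subset _ _)
      intro j _ hj
      exact hLzero j (by simpa using hj)
    have hprodc : (∏ j ∈ univ.filter (fun j => d j = 0), (c j : ℝ)) *
        ∏ j ∈ univ.filter (fun j => d j ≠ 0), (c j : ℝ) = 1080 := by
      rw [Finset.prod_filter_mul_prod_filter_not]
      rw [← Nat.cast_prod, hprod]
      norm_num
    rw [hprodratio, hsumL, ← mul_assoc, hprodc]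
end

section
/- Let k ≥ 0 and ℓ ≥ 1 be integers and let d ∈ ℕ^{ℓ} be a tuple of positive integers. For every integer M ≥ 2, consider the polynomial P_M = ∏_{n=1}^{M} [ (1 − q^n)^{2k} · ∏_{j=1}^{ℓ} (1 − q^n X^{2d_j})(1 − q^n X^{−2d_j}) ], regarded as a power series in q with coefficients in ℤ[X, X⁻¹]. Then: the coefficient of q⁰ in P_M is 1; the coefficient of q¹ in P_M is −(2k + σ₁(d)); and the coefficient of q² in P_M is σ₂(d) + (2k − 1)·σ₁(d) + 2k² − 3k + ℓ. -/
open LaurentPolynomial Finset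

/-- The truncated theta-block product
`P_M = ∏_{n=1}^{M} [(1 − qⁿ)^{2k} ∏_j (1 − qⁿ X^{2d_j})(1 − qⁿ X^{−2d_j})]`,
a power series in `q` with coefficients in `ℤ[X, X⁻¹]`. -/
noncomputable def thetaProd (k : ℕ) {ℓ : ℕ} (d : Fin ℓ → ℕ) (M : ℕ) :
    PowerSeries (LaurentPolynomial ℤ) :=
  ∏ n ∈ Finset.Icc 1 M,
    ((1 - PowerSeries.X ^ n) ^ (2 * k) *
      ∏ j, ((1 - PowerSeries.X ^ n * PowerSeries.C (T (2 * (d j : ℤ)))) *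
        (1 - PowerSeries.X ^ n * PowerSeries.C (T (-(2 * (d j : ℤ)))))))

namespace ThetaAux14

open PowerSeries

section General
variable {R : Type*} [CommRing R]

lemma mul_c0 (f g : PowerSeries R) : coeff 0 (f*g) = coeff 0 f * coeff 0 g := by
  rw [coeff_mul, show (Finset.HasAntidiagonal.antidiagonal 0 : Finset (ℕ×ℕ)) = {(0,0)} from by decide,
    Finset.sum_singleton]

lemma mul_c1 (f g : PowerSeries R) :
    coeff 1 (f*g) = coeff 0 f * coeff 1 g + coeff 1 f * coeff 0 g := by
  rw [coeff_mul, show (Finset.HasAntidiagonal.antidiagonal 1 : Finset (ℕ×ℕ)) = {(0,1),(1,0)} from by decide,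
    Finset.sum_insert (by decide), Finset.sum_singleton]

lemma mul_c2 (f g : PowerSeries R) :
    coeff 2 (f*g) = coeff 0 f * coeff 2 g + coeff 1 f * coeff 1 g
      + coeff 2 f * coeff 0 g := by
  rw [coeff_mul, show (Finset.HasAntidiagonal.antidiagonal 2 : Finset (ℕ×ℕ)) = {(0,2),(1,1),(2,0)} from by decide,
    Finset.sum_insert (by decide), Finset.sum_insert (by decide), Finset.sum_singleton, add_assoc]

lemma pow_c0 (f : PowerSeries R) (h : coeff 0 f = 1) (m : ℕ) : coeff 0 (f^m) = 1 := by
  induction m with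
  | zero => simp
  | succ m ih => rw [pow_succ, mul_c0, ih, h, mul_one]

lemma pow_c1 (f : PowerSeries R) (h : coeff 0 f = 1) (m : ℕ) :
    coeff 1 (f^m) = m * coeff 1 f := by
  induction m with
  | zero => simp
  | succ m ih => rw [pow_succ, mul_c1, ih, pow_c0 f h, h]; push_cast; ring

lemma pow_c2 (f : PowerSeries R) (h : coeff 0 f = 1) (m : ℕ) :
    coeff 2 (f^m) = m * coeff 2 f + (m.choose 2 : R) * (coeff 1 f)^2 := by
  induction m with
  | zero => simp
  | succ m ih =>
    rw [pow_succ, mul_c2, ih, pow_c0 f h, pow_c1 f h, h,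
      Nat.choose_succ_succ, Nat.choose_one_right]
    push_cast; ring

variable {ι : Type*} [LinearOrder ι]

omit [LinearOrder ι] in
lemma prod_c0 (s : Finset ι) (f : ι → PowerSeries R) (h : ∀ i ∈ s, coeff 0 (f i) = 1) :
    coeff 0 (∏ i ∈ s, f i) = 1 := by
  induction s using Finset.cons_induction with
  | empty => simp
  | cons a s ha ih =>
    rw [Finset.prod_cons, mul_c0, h a (Finset.mem_cons_self a s),
      ih (fun i hi => h i (Finset.mem_cons.2 (Or.inr hi))), one_mul]

omit [LinearOrder ι] in
lemma prod_c1 (s : Finset ι) (f : ι → PowerSeries R) (h : ∀ i ∈ s, coeff 0 (f i) = 1) :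
    coeff 1 (∏ i ∈ s, f i) = ∑ i ∈ s, coeff 1 (f i) := by
  induction s using Finset.cons_induction with
  | empty => simp
  | cons a s ha ih =>
    rw [Finset.prod_cons, mul_c1, h a (Finset.mem_cons_self a s),
      prod_c0 s f (fun i hi => h i (Finset.mem_cons.2 (Or.inr hi))),
      ih (fun i hi => h i (Finset.mem_cons.2 (Or.inr hi))), Finset.sum_cons]
    ring

lemma prod_c2 (s : Finset ι) (f : ι → PowerSeries R) (h : ∀ i ∈ s, coeff 0 (f i) = 1) :
    coeff 2 (∏ i ∈ s, f i) = ∑ i ∈ s, coeff 2 (f i)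
      + ∑ i ∈ s, ∑ j ∈ s.filter (fun j => i < j), coeff 1 (f i) * coeff 1 (f j) := by
  induction s using Finset.induction_on_max with
  | empty => simp
  | insert a s hmax ih =>
    have ha : a ∉ s := fun hmem => lt_irrefl a (hmax a hmem)
    have hs : ∀ i ∈ s, coeff 0 (f i) = 1 := fun i hi => h i (Finset.mem_insert_of_mem hi)
    rw [Finset.prod_insert ha, mul_c2, h a (Finset.mem_insert_self a s),
      prod_c0 s f hs, prod_c1 s f hs, ih hs, Finset.sum_insert ha, Finset.sum_insert ha]
    have h1 : (insert a s).filter (fun j => a < j) = ∅ := by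
      apply Finset.filter_eq_empty_iff.2
      intro x hx
      rcases Finset.mem_insert.1 hx with rfl | hx
      · exact lt_irrefl x
      · exact not_lt_of_gt (hmax x hx)
    have h2 : ∀ i ∈ s, (insert a s).filter (fun j => i < j)
        = insert a (s.filter (fun j => i < j)) := by
      intro i hi
      rw [Finset.filter_insert, if_pos (hmax i hi)]
    have h3 : ∑ i ∈ s, ∑ j ∈ (insert a s).filter (fun j => i < j),
        coeff 1 (f i) * coeff 1 (f j)
        = ∑ i ∈ s, (coeff 1 (f i) * coeff 1 (f a)
            + ∑ j ∈ s.filter (fun j => i < j), coeff 1 (f i) * coeff 1 (f j)) := by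
      refine Finset.sum_congr rfl (fun i hi => ?_)
      rw [h2 i hi, Finset.sum_insert (fun hmem => ha (Finset.mem_of_mem_filter a hmem))]
    rw [h1, Finset.sum_empty, h3, Finset.sum_add_distrib, ← Finset.sum_mul]
    ring

lemma factor_c (n i : ℕ) (u : R) :
    coeff i (1 - X^n * PowerSeries.C u) = (if i = 0 then 1 else 0) - (if i = n then u else 0) := by
  rw [map_sub, coeff_one, mul_comm, coeff_C_mul, coeff_X_pow]
  simp [mul_ite]

lemma pure_c (n i : ℕ) :
    coeff i (1 - X^n : PowerSeries R) = (if i = 0 then 1 else 0) - (if i = n then 1 else 0) := by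
  rw [map_sub, coeff_one, coeff_X_pow]

lemma choose_two_mul (k : ℕ) : (((2*k).choose 2 : ℕ) : ℤ) = 2*(k:ℤ)^2 - k := by
  induction k with
  | zero => simp
  | succ n ih =>
    rw [show 2*(n+1) = (2*n+1)+1 from by ring, Nat.choose_succ_succ, Nat.choose_one_right,
      Nat.choose_succ_succ, Nat.choose_one_right]
    push_cast
    rw [ih]
    push_cast
    ring

end General

end ThetaAux14
namespace ThetaAux14
open PowerSeries LaurentPolynomial Finset

noncomputable def Fblk {ℓ : ℕ} (d : Fin ℓ → ℕ) (n : ℕ) (j : Fin ℓ) :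
    PowerSeries (LaurentPolynomial ℤ) :=
  (1 - X ^ n * PowerSeries.C (T (2 * (d j : ℤ)))) * (1 - X ^ n * PowerSeries.C (T (-(2 * (d j : ℤ)))))

noncomputable def gblk (k : ℕ) {ℓ : ℕ} (d : Fin ℓ → ℕ) (n : ℕ) :
    PowerSeries (LaurentPolynomial ℤ) :=
  (1 - X ^ n) ^ (2 * k) * ∏ j, Fblk d n j

lemma theta_eq (k : ℕ) {ℓ : ℕ} (d : Fin ℓ → ℕ) (M : ℕ) :
    thetaProd k d M = ∏ n ∈ Finset.Icc 1 M, gblk k d n := rfl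

variable {ℓ : ℕ} (d : Fin ℓ → ℕ)

local notation "R" => LaurentPolynomial ℤ

lemma F_c0 (n : ℕ) (hn : 1 ≤ n) (j : Fin ℓ) : coeff 0 (Fblk d n j) = 1 := by
  have h : ¬((0:ℕ) = n) := by omega
  simp [Fblk, mul_c0, factor_c, h]

lemma F_c1_one (j : Fin ℓ) : coeff 1 (Fblk d 1 j) = -(rLaurent (d j)) := by
  simp [Fblk, mul_c1, factor_c, rLaurent]

lemma factor1_c0 (u : R) : coeff 0 (1 - X^1 * PowerSeries.C u) = 1 := by
  rw [factor_c, if_pos rfl, if_neg (by omega)]; ring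

lemma factor1_c1 (u : R) : coeff 1 (1 - X^1 * PowerSeries.C u) = -u := by
  rw [factor_c, if_neg (by omega), if_pos rfl]; ring

lemma factor1_c2 (u : R) : coeff 2 (1 - X^1 * PowerSeries.C u) = 0 := by
  rw [factor_c, if_neg (by omega), if_neg (by omega)]; ring

lemma F_c2_one (j : Fin ℓ) : coeff 2 (Fblk d 1 j) = 1 := by
  rw [Fblk, mul_c2]
  simp only [factor1_c0, factor1_c1, factor1_c2]
  rw [neg_mul_neg, ← T_add, add_neg_cancel, T_zero]
  ring

lemma F_c1_big (n : ℕ) (hn : 2 ≤ n) (j : Fin ℓ) : coeff 1 (Fblk d n j) = 0 := by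
  have h0 : ¬((0:ℕ) = n) := by omega
  have h1 : ¬((1:ℕ) = n) := by omega
  simp [Fblk, mul_c1, factor_c, h0, h1]

lemma F_c2_two (j : Fin ℓ) : coeff 2 (Fblk d 2 j) = -(rLaurent (d j)) := by
  simp [Fblk, mul_c2, factor_c, rLaurent]

lemma F_c2_big (n : ℕ) (hn : 3 ≤ n) (j : Fin ℓ) : coeff 2 (Fblk d n j) = 0 := by
  have h0 : ¬((0:ℕ) = n) := by omega
  have h1 : ¬((1:ℕ) = n) := by omega
  have h2 : ¬((2:ℕ) = n) := by omega
  simp [Fblk, mul_c2, factor_c, h0, h1, h2]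

lemma pure_c0 (n : ℕ) (hn : 1 ≤ n) : coeff 0 (1 - X^n : PowerSeries R) = 1 := by
  have h : ¬((0:ℕ) = n) := by omega
  simp [pure_c, h]

lemma pure_c1_one : coeff 1 (1 - X^1 : PowerSeries R) = -1 := by simp [pure_c]

lemma pure_c1_big (n : ℕ) (hn : 2 ≤ n) : coeff 1 (1 - X^n : PowerSeries R) = 0 := by
  have h1 : ¬((1:ℕ) = n) := by omega
  simp [pure_c, h1]

lemma pure_c2_two : coeff 2 (1 - X^2 : PowerSeries R) = -1 := by simp [pure_c]

lemma pure_c2_other (n : ℕ) (hn : n = 1 ∨ 3 ≤ n) : coeff 2 (1 - X^n : PowerSeries R) = 0 := by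
  have h2 : ¬((2:ℕ) = n) := by omega
  simp [pure_c, h2]

-- g block coefficients
lemma g_c0 (k n : ℕ) (hn : 1 ≤ n) : coeff 0 (gblk k d n) = 1 := by
  rw [gblk, mul_c0, pow_c0 _ (pure_c0 n hn),
    prod_c0 _ _ (fun j _ => F_c0 d n hn j), mul_one]

lemma g_c1_one (k : ℕ) :
    coeff 1 (gblk k d 1) = -((2*k : ℕ) : R) - sigma1 (fun j => (d j : ℤ)) := by
  rw [gblk, mul_c1, pow_c0 _ (pure_c0 1 le_rfl), pow_c1 _ (pure_c0 1 le_rfl), pure_c1_one,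
    prod_c0 _ _ (fun j _ => F_c0 d 1 le_rfl j),
    prod_c1 _ _ (fun j _ => F_c0 d 1 le_rfl j)]
  simp [F_c1_one, sigma1]
  ring

lemma g_c2_one (k : ℕ) :
    coeff 2 (gblk k d 1) = (((2*k).choose 2 : ℕ) : R) + ((2*k:ℕ) : R) * sigma1 (fun j => (d j : ℤ))
      + (ℓ : R) + sigma2 (fun j => (d j : ℤ)) := by
  rw [gblk, mul_c2, pow_c0 _ (pure_c0 1 le_rfl), pow_c1 _ (pure_c0 1 le_rfl),
    pow_c2 _ (pure_c0 1 le_rfl), pure_c1_one, pure_c2_other 1 (Or.inl rfl),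
    prod_c0 _ _ (fun j _ => F_c0 d 1 le_rfl j),
    prod_c1 _ _ (fun j _ => F_c0 d 1 le_rfl j),
    prod_c2 _ _ (fun j _ => F_c0 d 1 le_rfl j)]
  have e1 : ∑ j, coeff 1 (Fblk d 1 j) = -sigma1 (fun j => (d j : ℤ)) := by
    simp [F_c1_one, sigma1]
  have e2 : ∑ j : Fin ℓ, coeff 2 (Fblk d 1 j) = (ℓ : R) := by
    simp [F_c2_one]
  have e3 : ∑ i : Fin ℓ, ∑ j ∈ univ.filter (fun j => i < j),
      coeff 1 (Fblk d 1 i) * coeff 1 (Fblk d 1 j) = sigma2 (fun j => (d j : ℤ)) := by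
    rw [sigma2]
    refine Finset.sum_congr rfl (fun i _ => Finset.sum_congr rfl (fun j _ => ?_))
    rw [F_c1_one, F_c1_one, neg_mul_neg]
  rw [e1, e2, e3]
  ring

lemma g_c1_two (k : ℕ) : coeff 1 (gblk k d 2) = 0 := by
  rw [gblk, mul_c1, pow_c0 _ (pure_c0 2 (by omega)), pow_c1 _ (pure_c0 2 (by omega)),
    pure_c1_big 2 le_rfl, prod_c0 _ _ (fun j _ => F_c0 d 2 (by omega) j),
    prod_c1 _ _ (fun j _ => F_c0 d 2 (by omega) j)]
  simp [F_c1_big d 2 le_rfl]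

lemma g_c2_two (k : ℕ) :
    coeff 2 (gblk k d 2) = -((2*k:ℕ) : R) - sigma1 (fun j => (d j : ℤ)) := by
  rw [gblk, mul_c2, pow_c0 _ (pure_c0 2 (by omega)), pow_c1 _ (pure_c0 2 (by omega)),
    pow_c2 _ (pure_c0 2 (by omega)), pure_c1_big 2 le_rfl, pure_c2_two,
    prod_c0 _ _ (fun j _ => F_c0 d 2 (by omega) j),
    prod_c1 _ _ (fun j _ => F_c0 d 2 (by omega) j),
    prod_c2 _ _ (fun j _ => F_c0 d 2 (by omega) j)]
  have e1 : ∑ j, coeff 1 (Fblk d 2 j) = 0 := by simp [F_c1_big d 2 le_rfl]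
  have e2 : ∑ j : Fin ℓ, coeff 2 (Fblk d 2 j) = -sigma1 (fun j => (d j : ℤ)) := by
    simp [F_c2_two, sigma1]
  have e3 : ∑ i : Fin ℓ, ∑ j ∈ univ.filter (fun j => i < j),
      coeff 1 (Fblk d 2 i) * coeff 1 (Fblk d 2 j) = 0 := by
    simp [F_c1_big d 2 le_rfl]
  rw [e1, e2, e3]
  ring

lemma g_c1_big (k n : ℕ) (hn : 3 ≤ n) : coeff 1 (gblk k d n) = 0 := by
  rw [gblk, mul_c1, pow_c0 _ (pure_c0 n (by omega)), pow_c1 _ (pure_c0 n (by omega)),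
    pure_c1_big n (by omega), prod_c0 _ _ (fun j _ => F_c0 d n (by omega) j),
    prod_c1 _ _ (fun j _ => F_c0 d n (by omega) j)]
  simp [F_c1_big d n (by omega)]

lemma g_c2_big (k n : ℕ) (hn : 3 ≤ n) : coeff 2 (gblk k d n) = 0 := by
  rw [gblk, mul_c2, pow_c0 _ (pure_c0 n (by omega)), pow_c1 _ (pure_c0 n (by omega)),
    pow_c2 _ (pure_c0 n (by omega)), pure_c1_big n (by omega), pure_c2_other n (Or.inr hn),
    prod_c0 _ _ (fun j _ => F_c0 d n (by omega) j),
    prod_c1 _ _ (fun j _ => F_c0 d n (by omega) j),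
    prod_c2 _ _ (fun j _ => F_c0 d n (by omega) j)]
  simp [F_c1_big d n (by omega), F_c2_big d n hn]

lemma tail_c0 (k M : ℕ) : coeff 0 (∏ n ∈ Finset.Ioc 2 M, gblk k d n) = 1 :=
  prod_c0 _ _ (fun n hn => g_c0 d k n (by have := (Finset.mem_Ioc.1 hn).1; omega))

lemma tail_c1 (k M : ℕ) : coeff 1 (∏ n ∈ Finset.Ioc 2 M, gblk k d n) = 0 := by
  rw [prod_c1 _ _ (fun n hn => g_c0 d k n (by have := (Finset.mem_Ioc.1 hn).1; omega))]
  exact Finset.sum_eq_zero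
    (fun n hn => g_c1_big d k n (by have := (Finset.mem_Ioc.1 hn).1; omega))

lemma tail_c2 (k M : ℕ) : coeff 2 (∏ n ∈ Finset.Ioc 2 M, gblk k d n) = 0 := by
  rw [prod_c2 _ _ (fun n hn => g_c0 d k n (by have := (Finset.mem_Ioc.1 hn).1; omega)),
    Finset.sum_eq_zero
      (fun n hn => g_c2_big d k n (by have := (Finset.mem_Ioc.1 hn).1; omega)),
    Finset.sum_eq_zero (fun n hn => Finset.sum_eq_zero (fun m hm => by
      rw [g_c1_big d k n (by have := (Finset.mem_Ioc.1 hn).1; omega), zero_mul]))]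
  ring

lemma theta_split (k M : ℕ) (hM : 2 ≤ M) :
    thetaProd k d M = (gblk k d 1 * gblk k d 2) * ∏ n ∈ Finset.Ioc 2 M, gblk k d n := by
  rw [theta_eq, show Finset.Icc 1 M = Finset.Ioc 0 M from by
      ext x; simp [Finset.mem_Icc, Finset.mem_Ioc]; omega,
    ← Finset.prod_Ioc_consecutive _ (Nat.zero_le 2) hM]
  refine congrArg (· * ∏ n ∈ Finset.Ioc 2 M, gblk k d n) ?_
  rw [show Finset.Ioc 0 2 = ({1, 2} : Finset ℕ) from by decide,
    Finset.prod_insert (by decide), Finset.prod_singleton]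

theorem main (k : ℕ) (M : ℕ) (hM : 2 ≤ M) :
    coeff 0 (thetaProd k d M) = 1 ∧
    coeff 1 (thetaProd k d M) =
      -(((2 * k : ℤ) : R) + sigma1 (fun j => (d j : ℤ))) ∧
    coeff 2 (thetaProd k d M) =
      sigma2 (fun j => (d j : ℤ)) +
        ((2 * (k : ℤ) - 1 : ℤ) : R) * sigma1 (fun j => (d j : ℤ)) +
        ((2 * (k : ℤ) ^ 2 - 3 * (k : ℤ) + (ℓ : ℤ) : ℤ) : R) := by
  have hch : (((2*k).choose 2 : ℕ) : R) = 2*(k : R)^2 - (k : R) := by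
    have h := congrArg (fun z : ℤ => (z : R)) (choose_two_mul k)
    push_cast at h
    exact h
  refine ⟨?_, ?_, ?_⟩
  · rw [theta_split d k M hM]
    simp only [mul_c0]
    rw [tail_c0, g_c0 d k 1 le_rfl, g_c0 d k 2 (by omega)]
    ring
  · rw [theta_split d k M hM]
    simp only [mul_c0, mul_c1]
    rw [tail_c0, tail_c1, g_c0 d k 1 le_rfl, g_c0 d k 2 (by omega), g_c1_one, g_c1_two]
    push_cast
    ring
  · rw [theta_split d k M hM]
    simp only [mul_c0, mul_c1, mul_c2]
    rw [tail_c0, tail_c1, tail_c2, g_c0 d k 1 le_rfl, g_c0 d k 2 (by omega),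
      g_c1_one, g_c1_two, g_c2_one, g_c2_two, hch]
    push_cast
    ring

end ThetaAux14

theorem stmt_14 (k : ℕ) (ℓ : ℕ) (hℓ : 1 ≤ ℓ) (d : Fin ℓ → ℕ) (hd : ∀ j, 1 ≤ d j)
    (M : ℕ) (hM : 2 ≤ M) :
    PowerSeries.coeff 0 (thetaProd k d M) = 1 ∧
    PowerSeries.coeff 1 (thetaProd k d M) =
      -(((2 * k : ℤ) : LaurentPolynomial ℤ) + sigma1 (fun j => (d j : ℤ))) ∧
    PowerSeries.coeff 2 (thetaProd k d M) =
      sigma2 (fun j => (d j : ℤ)) +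
        ((2 * (k : ℤ) - 1 : ℤ) : LaurentPolynomial ℤ) * sigma1 (fun j => (d j : ℤ)) +
        ((2 * (k : ℤ) ^ 2 - 3 * (k : ℤ) + (ℓ : ℤ) : ℤ) : LaurentPolynomial ℤ) :=
  ThetaAux14.main d k M hM
end

section
/- Let T = (1,1,2,2,2,3,3,4,4,5,5,6,6,7,8,8,9,10,11,12,13,14) and E = (1,10,2,2,18,3,3,4,4,15,5,6,6,7,8,16,9,10,22,12,13,14), tuples of length 22. For every integer M ≥ 2, the coefficient of q² in the power series ( ∏_{j=1}^{22} (X^{T_j} − X^{−T_j}) ) · ∏_{n=1}^{M} [ (1 − q^n)^{4} · ∏_{j=1}^{22} (1 − q^n X^{2T_j})(1 − q^n X^{−2T_j}) ] (a power series in q with coefficients in ℤ[X, X⁻¹]) equals ∏_{j=1}^{22} (X^{E_j} − X^{−E_j}). (This expresses that the q⁴-coefficient of the weight-2 theta block φ_{587} = TB₂(T) is the baby theta block BTB(E).) -/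
open LaurentPolynomial Finset

/-- The list `T = (1,1,2,2,2,3,3,4,4,5,5,6,6,7,8,8,9,10,11,12,13,14)`. -/
def Tlist : Fin 22 → ℤ :=
  ![1, 1, 2, 2, 2, 3, 3, 4, 4, 5, 5, 6, 6, 7, 8, 8, 9, 10, 11, 12, 13, 14]

/-- The list `E = (1,10,2,2,18,3,3,4,4,15,5,6,6,7,8,16,9,10,22,12,13,14)`. -/
def Elist : Fin 22 → ℤ :=
  ![1, 10, 2, 2, 18, 3, 3, 4, 4, 15, 5, 6, 6, 7, 8, 16, 9, 10, 22, 12, 13, 14]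

namespace StmtAux

def TlistN : Fin 22 → ℕ :=
  ![1, 1, 2, 2, 2, 3, 3, 4, 4, 5, 5, 6, 6, 7, 8, 8, 9, 10, 11, 12, 13, 14]

def ElistN : Fin 22 → ℕ :=
  ![1, 10, 2, 2, 18, 3, 3, 4, 4, 15, 5, 6, 6, 7, 8, 16, 9, 10, 22, 12, 13, 14]

lemma Tlist_eq (j : Fin 22) : Tlist j = (TlistN j : ℤ) := by revert j; decide

lemma Elist_eq (j : Fin 22) : Elist j = (ElistN j : ℤ) := by revert j; decide

noncomputable def u : LaurentPolynomial ℤ := T 1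

lemma u_pow (n : ℕ) : u ^ n = (T (n : ℤ) : LaurentPolynomial ℤ) := by
  rw [u, T_pow, mul_one]

noncomputable def Aval : LaurentPolynomial ℤ := ∏ j, (T (Tlist j) - T (-(Tlist j)))
noncomputable def Bval : LaurentPolynomial ℤ := ∏ j, (T (Elist j) - T (-(Elist j)))
noncomputable def Sval : LaurentPolynomial ℤ :=
  4 + ∑ j, (T (2 * Tlist j) + T (-(2 * Tlist j)))
noncomputable def Qval : LaurentPolynomial ℤ :=
  4 + ∑ j, (T (4 * Tlist j) + T (-(4 * Tlist j)))
noncomputable def PA : LaurentPolynomial ℤ := ∏ j, (u ^ (2 * TlistN j) - 1)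
noncomputable def PB : LaurentPolynomial ℤ := ∏ j, (u ^ (2 * ElistN j) - 1)
noncomputable def sig : LaurentPolynomial ℤ :=
  4 * u ^ 56 + ∑ j, (u ^ (56 + 2 * TlistN j) + u ^ (56 - 2 * TlistN j))
noncomputable def piv : LaurentPolynomial ℤ :=
  4 * u ^ 112 + ∑ j, (u ^ (112 + 4 * TlistN j) + u ^ (112 - 4 * TlistN j))

lemma prod_T {ι : Type*} (s : Finset ι) (f : ι → ℤ) :
    (∏ i ∈ s, T (f i) : LaurentPolynomial ℤ) = T (∑ i ∈ s, f i) := by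
  induction s using Finset.cons_induction with
  | empty => simp
  | cons a s ha ih => rw [Finset.prod_cons, Finset.sum_cons, T_add, ih]

lemma hA : Aval = T (-136) * PA := by
  have h1 : ∀ j : Fin 22, T (Tlist j) - T (-(Tlist j)) =
      T (-(TlistN j : ℤ)) * (u ^ (2 * TlistN j) - 1) := by
    intro j
    rw [Tlist_eq j, u_pow, mul_sub, mul_one, ← T_add,
      show (-(TlistN j : ℤ) + ((2 * TlistN j : ℕ) : ℤ)) = (TlistN j : ℤ) from by
        push_cast; ring]
  unfold Aval PA
  rw [Finset.prod_congr rfl (fun j _ => h1 j), Finset.prod_mul_distrib, prod_T,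
    show (∑ j, -((TlistN j : ℕ) : ℤ)) = -136 from by decide]

lemma hB : Bval = T (-190) * PB := by
  have h1 : ∀ j : Fin 22, T (Elist j) - T (-(Elist j)) =
      T (-(ElistN j : ℤ)) * (u ^ (2 * ElistN j) - 1) := by
    intro j
    rw [Elist_eq j, u_pow, mul_sub, mul_one, ← T_add,
      show (-(ElistN j : ℤ) + ((2 * ElistN j : ℕ) : ℤ)) = (ElistN j : ℤ) from by
        push_cast; ring]
  unfold Bval PB
  rw [Finset.prod_congr rfl (fun j _ => h1 j), Finset.prod_mul_distrib, prod_T,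
    show (∑ j, -((ElistN j : ℕ) : ℤ)) = -190 from by decide]

lemma hS : Sval = T (-56) * sig := by
  have hb : ∀ j : Fin 22, TlistN j ≤ 14 := by decide
  have h1 : ∀ j : Fin 22, T (2 * Tlist j) + T (-(2 * Tlist j)) =
      T (-(56 : ℤ)) * (u ^ (56 + 2 * TlistN j) + u ^ (56 - 2 * TlistN j)) := by
    intro j
    have hbj := hb j
    rw [Tlist_eq j, u_pow, u_pow, mul_add, ← T_add, ← T_add,
      show (-(56 : ℤ) + ((56 + 2 * TlistN j : ℕ) : ℤ)) = 2 * (TlistN j : ℤ) from by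
        push_cast; ring,
      show (-(56 : ℤ) + ((56 - 2 * TlistN j : ℕ) : ℤ)) = -(2 * (TlistN j : ℤ)) from by
        omega]
  unfold Sval sig
  rw [Finset.sum_congr rfl (fun j _ => h1 j), ← Finset.mul_sum, mul_add]
  congr 1
  rw [u_pow,
    show (T (-(56:ℤ)) * (4 * T (((56:ℕ)):ℤ)) : LaurentPolynomial ℤ)
        = 4 * (T (-(56:ℤ)) * T (((56:ℕ)):ℤ)) from by ring, ← T_add,
    show (-(56 : ℤ) + ((56 : ℕ) : ℤ)) = 0 from by omega, T_zero, mul_one]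

lemma hQ : Qval = T (-112) * piv := by
  have hb : ∀ j : Fin 22, TlistN j ≤ 14 := by decide
  have h1 : ∀ j : Fin 22, T (4 * Tlist j) + T (-(4 * Tlist j)) =
      T (-(112 : ℤ)) * (u ^ (112 + 4 * TlistN j) + u ^ (112 - 4 * TlistN j)) := by
    intro j
    have hbj := hb j
    rw [Tlist_eq j, u_pow, u_pow, mul_add, ← T_add, ← T_add,
      show (-(112 : ℤ) + ((112 + 4 * TlistN j : ℕ) : ℤ)) = 4 * (TlistN j : ℤ) from by
        push_cast; ring,
      show (-(112 : ℤ) + ((112 - 4 * TlistN j : ℕ) : ℤ)) = -(4 * (TlistN j : ℤ)) from by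
        omega]
  unfold Qval piv
  rw [Finset.sum_congr rfl (fun j _ => h1 j), ← Finset.mul_sum, mul_add]
  congr 1
  rw [u_pow,
    show (T (-(112:ℤ)) * (4 * T (((112:ℕ)):ℤ)) : LaurentPolynomial ℤ)
        = 4 * (T (-(112:ℤ)) * T (((112:ℕ)):ℤ)) from by ring, ← T_add,
    show (-(112 : ℤ) + ((112 : ℕ) : ℤ)) = 0 from by omega, T_zero, mul_one]

set_option maxRecDepth 100000 in
set_option maxHeartbeats 4000000 in
lemma bigring : PA * (sig ^ 2 - piv - 2 * u ^ 56 * sig) = 2 * u ^ 58 * PB := by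
  unfold PA PB sig piv
  simp only [Fin.prod_univ_succ, Fin.sum_univ_succ, Fin.prod_univ_zero, Fin.sum_univ_zero,
    TlistN, ElistN, Matrix.cons_val_zero, Matrix.cons_val_succ, Matrix.cons_val_one,
    Matrix.head_cons]
  norm_num
  ring

lemma two_cancel (x y : LaurentPolynomial ℤ) (h : 2 * x = 2 * y) : x = y := by
  letI : NoZeroDivisors (LaurentPolynomial ℤ) := by unfold LaurentPolynomial; infer_instance
  have h2 : (2 : LaurentPolynomial ℤ) ≠ 0 := by
    have he : (2 : LaurentPolynomial ℤ) = C 2 := (map_ofNat C 2).symm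
    rw [he, ← single_eq_C]
    exact fun hh => (by norm_num : (2:ℤ) ≠ 0) (AddMonoidAlgebra.single_eq_zero.mp hh)
  exact mul_left_cancel₀ h2 h

lemma identI : Aval * (Sval ^ 2 - Qval - 2 * Sval) = 2 * Bval := by
  have h1 : (T (-56) * T (-56) : LaurentPolynomial ℤ) = T (-112) := by
    rw [← T_add]; norm_num
  have h2 : (T (-112) * u ^ 56 : LaurentPolynomial ℤ) = T (-56) := by
    rw [u_pow, ← T_add]; norm_num
  have h3 : (T (-136) * T (-112) : LaurentPolynomial ℤ) = T (-248) := by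
    rw [← T_add]; norm_num
  have h4 : (T (-248) * u ^ 58 : LaurentPolynomial ℤ) = T (-190) := by
    rw [u_pow, ← T_add]; norm_num
  rw [hA, hB, hS, hQ]
  linear_combination (T (-136) * PA * sig ^ 2) * h1 + (2 * T (-136) * PA * sig) * h2 +
    (PA * (sig ^ 2 - piv - 2 * u ^ 56 * sig)) * h3 + T (-248) * bigring + (2 * PB) * h4

noncomputable def Fps (n : ℕ) : PowerSeries (LaurentPolynomial ℤ) :=
  (1 - PowerSeries.X ^ n) ^ 4 *
    ∏ j, ((1 - PowerSeries.X ^ n * PowerSeries.C (T (2 * Tlist j))) *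
      (1 - PowerSeries.X ^ n * PowerSeries.C (T (-(2 * Tlist j)))))

lemma prod_form {ι : Type*} (n : ℕ) (s : Finset ι) (c : ι → LaurentPolynomial ℤ) :
    ∃ e h, (∏ i ∈ s, (1 - PowerSeries.X ^ n * PowerSeries.C (c i))) =
      1 - PowerSeries.C (∑ i ∈ s, c i) * PowerSeries.X ^ n
        + PowerSeries.C e * PowerSeries.X ^ (2 * n) + h * PowerSeries.X ^ (3 * n)
      ∧ 2 * e = (∑ i ∈ s, c i) ^ 2 - ∑ i ∈ s, (c i) ^ 2 := by
  induction s using Finset.cons_induction with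
  | empty => exact ⟨0, 0, by simp, by simp⟩
  | cons a s ha ih =>
    obtain ⟨e, h, hf, he⟩ := ih
    refine ⟨e + c a * ∑ i ∈ s, c i,
      h - PowerSeries.C (c a * e) - PowerSeries.C (c a) * h * PowerSeries.X ^ n, ?_, ?_⟩
    · rw [Finset.prod_cons, hf, Finset.sum_cons]
      simp only [map_add, map_mul]
      ring
    · rw [Finset.sum_cons, Finset.sum_cons]
      linear_combination he

lemma F_form (n : ℕ) : ∃ e h, Fps n =
    1 - PowerSeries.C Sval * PowerSeries.X ^ n
      + PowerSeries.C e * PowerSeries.X ^ (2 * n) + h * PowerSeries.X ^ (3 * n)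
    ∧ 2 * e = Sval ^ 2 - Qval := by
  classical
  set c : (Fin 4 ⊕ (Fin 22 ⊕ Fin 22)) → LaurentPolynomial ℤ :=
    Sum.elim (fun _ => 1)
      (Sum.elim (fun j => T (2 * Tlist j)) (fun j => T (-(2 * Tlist j)))) with hc
  obtain ⟨e, h, hf, he⟩ := prod_form n Finset.univ c
  have hsum : ∑ i, c i = Sval := by
    rw [hc]
    rw [Fintype.sum_sum_type, Fintype.sum_sum_type]
    simp only [Sum.elim_inl, Sum.elim_inr]
    rw [Finset.sum_const, Finset.card_univ, ← Finset.sum_add_distrib]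
    simp [Sval, Fintype.card_fin]
  have hsq : ∑ i, (c i) ^ 2 = Qval := by
    rw [hc]
    rw [Fintype.sum_sum_type, Fintype.sum_sum_type]
    simp only [Sum.elim_inl, Sum.elim_inr, one_pow, T_pow]
    rw [Finset.sum_const, Finset.card_univ, ← Finset.sum_add_distrib]
    rw [show (∑ j : Fin 22, (T ((2:ℕ) * (2 * Tlist j)) + T ((2:ℕ) * -(2 * Tlist j)) :
        LaurentPolynomial ℤ)) =
        ∑ j : Fin 22, (T (4 * Tlist j) + T (-(4 * Tlist j))) from
      Finset.sum_congr rfl (fun j _ => by push_cast; ring_nf)]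
    simp [Qval, Fintype.card_fin]
  have hFeq : Fps n = ∏ i, (1 - PowerSeries.X ^ n * PowerSeries.C (c i)) := by
    rw [hc, Fintype.prod_sum_type, Fintype.prod_sum_type]
    simp only [Sum.elim_inl, Sum.elim_inr]
    rw [Fps, Finset.prod_mul_distrib]
    congr 1
    rw [map_one, mul_one, Finset.prod_const, Finset.card_univ, Fintype.card_fin]
  exact ⟨e, h, by rw [hFeq, hf, hsum], by rw [he, hsum, hsq]⟩

lemma coeff_F_zero (n : ℕ) (hn : 1 ≤ n) :
    PowerSeries.coeff (R := LaurentPolynomial ℤ) 0 (Fps n) = 1 := by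
  obtain ⟨e, h, hf, -⟩ := F_form n
  rw [hf]
  simp only [map_add, map_sub, PowerSeries.coeff_one, PowerSeries.coeff_C_mul,
    PowerSeries.coeff_X_pow, PowerSeries.coeff_mul_X_pow']
  norm_num
  split_ifs <;> (first | (exfalso; omega) | ring1)

lemma coeff_F_one_big (n : ℕ) (hn : 2 ≤ n) :
    PowerSeries.coeff (R := LaurentPolynomial ℤ) 1 (Fps n) = 0 := by
  obtain ⟨e, h, hf, -⟩ := F_form n
  rw [hf]
  simp only [map_add, map_sub, PowerSeries.coeff_one, PowerSeries.coeff_C_mul,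
    PowerSeries.coeff_X_pow, PowerSeries.coeff_mul_X_pow']
  norm_num
  split_ifs <;> (first | (exfalso; omega) | ring1)

lemma coeff_F_two_big (n : ℕ) (hn : 3 ≤ n) :
    PowerSeries.coeff (R := LaurentPolynomial ℤ) 2 (Fps n) = 0 := by
  obtain ⟨e, h, hf, -⟩ := F_form n
  rw [hf]
  simp only [map_add, map_sub, PowerSeries.coeff_one, PowerSeries.coeff_C_mul,
    PowerSeries.coeff_X_pow, PowerSeries.coeff_mul_X_pow']
  norm_num
  split_ifs <;> (first | (exfalso; omega) | ring1)

lemma coeff_two_base :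
    PowerSeries.coeff (R := LaurentPolynomial ℤ) 2
      (PowerSeries.C (R := LaurentPolynomial ℤ) Aval * (Fps 1 * Fps 2)) = Bval := by
  obtain ⟨e1, h1, hf1, he1⟩ := F_form 1
  obtain ⟨e2, h2, hf2, he2⟩ := F_form 2
  have c10 : PowerSeries.coeff (R := LaurentPolynomial ℤ) 0 (Fps 1) = 1 := coeff_F_zero 1 le_rfl
  have c20 : PowerSeries.coeff (R := LaurentPolynomial ℤ) 0 (Fps 2) = 1 :=
    coeff_F_zero 2 (by norm_num)
  have c21 : PowerSeries.coeff (R := LaurentPolynomial ℤ) 1 (Fps 2) = 0 := coeff_F_one_big 2 le_rfl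
  have c11 : PowerSeries.coeff (R := LaurentPolynomial ℤ) 1 (Fps 1) = -Sval := by
    rw [hf1]
    simp only [map_add, map_sub, PowerSeries.coeff_one, PowerSeries.coeff_C_mul,
      PowerSeries.coeff_X_pow, PowerSeries.coeff_mul_X_pow', PowerSeries.coeff_C]
    norm_num
  have c12 : PowerSeries.coeff (R := LaurentPolynomial ℤ) 2 (Fps 1) = e1 := by
    rw [hf1]
    simp only [map_add, map_sub, PowerSeries.coeff_one, PowerSeries.coeff_C_mul,
      PowerSeries.coeff_X_pow, PowerSeries.coeff_mul_X_pow', PowerSeries.coeff_C]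
    norm_num
  have c22 : PowerSeries.coeff (R := LaurentPolynomial ℤ) 2 (Fps 2) = -Sval := by
    rw [hf2]
    simp only [map_add, map_sub, PowerSeries.coeff_one, PowerSeries.coeff_C_mul,
      PowerSeries.coeff_X_pow, PowerSeries.coeff_mul_X_pow', PowerSeries.coeff_C]
    norm_num
  have hm1 : ((0,2) : ℕ×ℕ) ∉ ({(1,1),(2,0)} : Finset (ℕ×ℕ)) := by decide
  have hm2 : ((1,1) : ℕ×ℕ) ∉ ({(2,0)} : Finset (ℕ×ℕ)) := by decide
  rw [PowerSeries.coeff_C_mul, PowerSeries.coeff_mul]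
  rw [show (Finset.HasAntidiagonal.antidiagonal 2 : Finset (ℕ×ℕ)) = {(0,2),(1,1),(2,0)} from by decide]
  rw [Finset.sum_insert hm1, Finset.sum_insert hm2, Finset.sum_singleton]
  simp only []
  rw [c10, c11, c12, c20, c21, c22]
  apply two_cancel
  linear_combination Aval * he1 + identI

end StmtAux

open StmtAux in
/-- The `q⁴`-coefficient of the weight-2 theta block `φ₅₈₇ = TB₂(T)`, i.e. the
`q²`-coefficient of the normalized product
`(∏_j (X^{T_j} − X^{−T_j})) ∏_{n=1}^{M} [(1 − qⁿ)⁴ ∏_j (1 − qⁿX^{2T_j})(1 − qⁿX^{−2T_j})]`,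
equals the baby theta block `BTB(E) = ∏_j (X^{E_j} − X^{−E_j})`, for every `M ≥ 2`. -/
theorem stmt_15 (M : ℕ) (hM : 2 ≤ M) :
    PowerSeries.coeff (R := LaurentPolynomial ℤ) 2
      ((PowerSeries.C (∏ j, (T (Tlist j) - T (-(Tlist j))))) *
        ∏ n ∈ Finset.Icc 1 M,
          ((1 - PowerSeries.X ^ n) ^ 4 *
            ∏ j, ((1 - PowerSeries.X ^ n * PowerSeries.C (T (2 * Tlist j))) *
              (1 - PowerSeries.X ^ n * PowerSeries.C (T (-(2 * Tlist j))))))) =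
      ∏ j, (T (Elist j) - T (-(Elist j))) := by
  show PowerSeries.coeff (R := LaurentPolynomial ℤ) 2
      (PowerSeries.C (R := LaurentPolynomial ℤ) Aval * ∏ n ∈ Finset.Icc 1 M, Fps n) = Bval
  induction M, hM using Nat.le_induction with
  | base =>
    rw [show Finset.Icc 1 2 = ({1, 2} : Finset ℕ) from by decide,
      Finset.prod_insert (by decide), Finset.prod_singleton]
    exact coeff_two_base
  | succ M hM ih =>
    rw [Finset.prod_Icc_succ_top (by omega : 1 ≤ M + 1), ← mul_assoc,
      PowerSeries.coeff_mul,
      show (Finset.HasAntidiagonal.antidiagonal 2 : Finset (ℕ×ℕ)) = {(0,2),(1,1),(2,0)} from by decide,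
      Finset.sum_insert (by decide : ((0,2) : ℕ×ℕ) ∉ ({(1,1),(2,0)} : Finset (ℕ×ℕ))),
      Finset.sum_insert (by decide : ((1,1) : ℕ×ℕ) ∉ ({(2,0)} : Finset (ℕ×ℕ))),
      Finset.sum_singleton]
    simp only []
    rw [coeff_F_two_big (M+1) (by omega), coeff_F_one_big (M+1) (by omega),
      coeff_F_zero (M+1) (by omega)]
    rw [mul_zero, mul_zero, mul_one, zero_add, zero_add]
    exact ih
end
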